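/- arXiv:2205.04245 — 4 statements merged into one kernel-verified Lean document; each statement's English description precedes it below -/
import Mathlib

section
/- (Series for the square root of the principal root of the trinomial equation.) Let n ≥ 2 be a natural number. There exists ε > 0 such that for every x ∈ ℂ with |x| < ε, the family over k ∈ ℕ with general term a(k) = (1/(2n)) · (−1)^k · Γ(1/(2n) + (n−1)k/n) · ( Γ(1/(2n) − k/n + 1) )⁻¹ · x^k / k! is summable, and the square z = ( Σ_{k ∈ ℕ} a(k) )² of its sum satisfies zⁿ + x·z^{n−1} − 1 = 0. -/
open Finset

namespace MellinAux

noncomputable def fF (β : ℂ) (k : ℕ) (t : ℂ) : ℂ :=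
  (∏ j ∈ Finset.range k, (t + β * k - j)) / (Nat.factorial k : ℂ)

noncomputable def AF (β : ℂ) : ℕ → ℂ → ℂ
  | 0, _ => 1
  | (k+1), t => fF β (k+1) t - β * fF β k (t + β - 1)

@[simp] lemma fF_zero (β t : ℂ) : fF β 0 t = 1 := by simp [fF]

@[simp] lemma AF_zero (β t : ℂ) : AF β 0 t = 1 := rfl

lemma factorial_ne' (k : ℕ) : ((Nat.factorial k : ℂ)) ≠ 0 := by
  exact_mod_cast Nat.cast_ne_zero.mpr (Nat.factorial_ne_zero k)

lemma fF_succ_eq (β : ℂ) (k : ℕ) (t : ℂ) :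
    fF β (k+1) t = (t + β * (k+1)) * (∏ j ∈ range k, (t + β * (k+1) - 1 - j))
      / (Nat.factorial (k+1) : ℂ) := by
  unfold fF
  congr 1
  have h1 := Finset.prod_range_succ' (fun j : ℕ => t + β * ((k:ℂ)+1) - (j:ℂ)) k
  push_cast
  rw [h1]
  simp only [Nat.cast_zero, sub_zero, Nat.cast_add, Nat.cast_one]
  rw [mul_comm]
  congr 1
  apply Finset.prod_congr rfl
  intro j _
  ring

/-- Pascal-type recurrence for `fF`. -/
lemma fF_pascal (β : ℂ) (k : ℕ) (t : ℂ) :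
    fF β (k+1) t = fF β (k+1) (t-1) + fF β k (t + β - 1) := by
  have h1 := fF_succ_eq β k t
  have h2 : fF β (k+1) (t-1)
      = (∏ j ∈ range k, (t + β * (k+1) - 1 - j)) * (t + β * (k+1) - 1 - k)
        / (Nat.factorial (k+1) : ℂ) := by
    unfold fF
    congr 1
    have := Finset.prod_range_succ (fun j : ℕ => (t-1) + β * ((k:ℂ)+1) - (j:ℂ)) k
    push_cast
    rw [this]
    congr 1
    · apply Finset.prod_congr rfl; intro j _; ring
    · ring
  have h3 : fF β k (t + β - 1)
      = (∏ j ∈ range k, (t + β * (k+1) - 1 - j)) / (Nat.factorial k : ℂ) := by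
    unfold fF
    congr 1
    apply Finset.prod_congr rfl; intro j _; push_cast; ring
  rw [h1, h2, h3]
  have hfac : (Nat.factorial (k+1) : ℂ) = (k+1) * Nat.factorial k := by
    push_cast [Nat.factorial_succ]; ring
  rw [hfac]
  have hk : ((k:ℂ)+1) ≠ 0 := Nat.cast_add_one_ne_zero k
  have hf : (Nat.factorial k : ℂ) ≠ 0 := factorial_ne' k
  field_simp
  ring

lemma AF_one (β t : ℂ) : AF β 1 t = t := by
  simp [AF, fF]

/-- Product formula for `AF`. -/
lemma AF_prod (β : ℂ) (k : ℕ) (t : ℂ) :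
    AF β (k+1) t = t * (∏ j ∈ range k, (t + β * (k+1) - 1 - j)) / (Nat.factorial (k+1) : ℂ) := by
  show fF β (k+1) t - β * fF β k (t + β - 1) = _
  have h1 := fF_succ_eq β k t
  have h3 : fF β k (t + β - 1)
      = (∏ j ∈ range k, (t + β * (k+1) - 1 - j)) / (Nat.factorial k : ℂ) := by
    unfold fF
    congr 1
    apply Finset.prod_congr rfl; intro j _; push_cast; ring
  rw [h1, h3]
  have hfac : (Nat.factorial (k+1) : ℂ) = (k+1) * Nat.factorial k := by
    push_cast [Nat.factorial_succ]; ring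
  rw [hfac]
  have hk : ((k:ℂ)+1) ≠ 0 := Nat.cast_add_one_ne_zero k
  have hf : (Nat.factorial k : ℂ) ≠ 0 := factorial_ne' k
  field_simp
  ring

lemma AF_eval_zero (β : ℂ) (k : ℕ) : AF β (k+1) 0 = 0 := by
  rw [AF_prod]; simp

/-- Recurrence for `AF` in the argument. -/
lemma AF_rec (β : ℂ) (k : ℕ) (t : ℂ) :
    AF β (k+1) t = AF β (k+1) (t-1) + AF β k (t + β - 1) := by
  cases k with
  | zero => simp [AF_one]
  | succ m =>
    show fF β (m+2) t - β * fF β (m+1) (t + β - 1)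
      = (fF β (m+2) (t-1) - β * fF β (m+1) (t-1 + β - 1))
        + (fF β (m+1) (t+β-1) - β * fF β m ((t+β-1) + β - 1))
    have e1 := fF_pascal β (m+1) t
    have e2 := fF_pascal β m (t + β - 1)
    have e3 : (t - 1 + β - 1 : ℂ) = t + β - 1 - 1 := by ring
    rw [e3]
    linear_combination e1 - β * e2


/-- `g : ℂ → ℂ` is a polynomial function. -/
def IsPolyFun (g : ℂ → ℂ) : Prop := ∃ p : Polynomial ℂ, ∀ s, g s = p.eval s

lemma IsPolyFun.const (c : ℂ) : IsPolyFun (fun _ => c) := ⟨Polynomial.C c, by simp⟩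

lemma IsPolyFun.add {g h : ℂ → ℂ} (hg : IsPolyFun g) (hh : IsPolyFun h) :
    IsPolyFun (fun s => g s + h s) := by
  obtain ⟨p, hp⟩ := hg; obtain ⟨q, hq⟩ := hh
  exact ⟨p + q, fun s => by simp [hp s, hq s]⟩

lemma IsPolyFun.sub {g h : ℂ → ℂ} (hg : IsPolyFun g) (hh : IsPolyFun h) :
    IsPolyFun (fun s => g s - h s) := by
  obtain ⟨p, hp⟩ := hg; obtain ⟨q, hq⟩ := hh
  exact ⟨p - q, fun s => by simp [hp s, hq s]⟩

lemma IsPolyFun.mul {g h : ℂ → ℂ} (hg : IsPolyFun g) (hh : IsPolyFun h) :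
    IsPolyFun (fun s => g s * h s) := by
  obtain ⟨p, hp⟩ := hg; obtain ⟨q, hq⟩ := hh
  exact ⟨p * q, fun s => by simp [hp s, hq s]⟩

lemma IsPolyFun.linear (c : ℂ) : IsPolyFun (fun s => s + c) :=
  ⟨Polynomial.X + Polynomial.C c, by simp⟩

lemma IsPolyFun.prod {ι : Type*} (T : Finset ι) (g : ι → ℂ → ℂ)
    (hg : ∀ i ∈ T, IsPolyFun (g i)) : IsPolyFun (fun s => ∏ i ∈ T, g i s) := by
  classical
  induction T using Finset.induction_on with
  | empty => simpa using IsPolyFun.const 1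
  | @insert a T' hnotmem ih =>
    have h1 := hg a (Finset.mem_insert_self a T')
    have h2 := ih (fun i hi => hg i (Finset.mem_insert_of_mem hi))
    have := h1.mul h2
    simpa [Finset.prod_insert hnotmem] using this

lemma IsPolyFun.sum {ι : Type*} (T : Finset ι) (g : ι → ℂ → ℂ)
    (hg : ∀ i ∈ T, IsPolyFun (g i)) : IsPolyFun (fun s => ∑ i ∈ T, g i s) := by
  classical
  induction T using Finset.induction_on with
  | empty => simpa using IsPolyFun.const 0
  | @insert a T' hnotmem ih =>
    have h1 := hg a (Finset.mem_insert_self a T')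
    have h2 := ih (fun i hi => hg i (Finset.mem_insert_of_mem hi))
    have := h1.add h2
    simpa [Finset.sum_insert hnotmem] using this

/-- `fF` with shifted argument is a polynomial function. -/
lemma isPolyFun_fF_shift (β : ℂ) (k : ℕ) (c : ℂ) :
    IsPolyFun (fun s => fF β k (c + s)) := by
  have : IsPolyFun (fun s => ∏ j ∈ range k, (s + (c + β * k - j))) :=
    IsPolyFun.prod _ _ (fun j _ => IsPolyFun.linear _)
  have h2 := this.mul (IsPolyFun.const ((Nat.factorial k : ℂ))⁻¹)
  obtain ⟨p, hp⟩ := h2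
  refine ⟨p, fun s => ?_⟩
  rw [← hp s]
  show fF β k (c + s) = (∏ j ∈ range k, (s + (c + β * ↑k - ↑j))) * ((Nat.factorial k : ℂ))⁻¹
  unfold fF
  rw [div_eq_mul_inv]
  congr 1
  apply Finset.prod_congr rfl
  intro j _; ring

lemma isPolyFun_fF (β : ℂ) (k : ℕ) : IsPolyFun (fun s => fF β k s) := by
  have := isPolyFun_fF_shift β k 0
  simpa using this

lemma isPolyFun_AF (β : ℂ) (k : ℕ) : IsPolyFun (fun t => AF β k t) := by
  cases k with
  | zero => exact IsPolyFun.const 1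
  | succ m =>
    show IsPolyFun (fun t => fF β (m+1) t - β * fF β m (t + β - 1))
    refine (isPolyFun_fF β (m+1)).sub (((IsPolyFun.const β)).mul ?_)
    obtain ⟨p, hp⟩ := isPolyFun_fF_shift β m (β - 1)
    refine ⟨p, fun s => ?_⟩
    rw [← hp s]
    show fF β m (s + β - 1) = fF β m ((β - 1) + s)
    congr 1; ring

/-- A 1-periodic polynomial function is constant. -/
lemma IsPolyFun.const_of_periodic {g : ℂ → ℂ} (hg : IsPolyFun g)
    (hper : ∀ s, g s = g (s - 1)) : ∀ s, g s = g 0 := by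
  obtain ⟨p, hp⟩ := hg
  have hnat : ∀ m : ℕ, p.eval (m : ℂ) = p.eval 0 := by
    intro m
    induction m with
    | zero => simp
    | succ l ih =>
      have := hper ((l : ℂ) + 1)
      rw [hp, hp] at this
      simpa [this] using ih
  have : p - Polynomial.C (p.eval 0) = 0 := by
    apply Polynomial.eq_zero_of_infinite_isRoot
    apply Set.Infinite.mono (s := (fun m : ℕ => (m : ℂ)) '' Set.univ)
    · rintro z ⟨m, -, rfl⟩
      simp [Polynomial.IsRoot, hnat m]
    · apply Set.infinite_coe_iff.mp
      rw [Set.image_univ]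
      exact Set.infinite_coe_iff.mpr (Set.infinite_range_of_injective Nat.cast_injective)
  intro s
  have h0 : p.eval s - p.eval 0 = 0 := by
    have := congrArg (Polynomial.eval s) this
    simpa using this
  rw [hp, hp]
  exact sub_eq_zero.mp h0



lemma isPolyFun_fF_shift' (β : ℂ) (k : ℕ) (c : ℂ) :
    IsPolyFun (fun s => fF β k (s + c)) := by
  obtain ⟨p, hp⟩ := isPolyFun_fF_shift β k c
  refine ⟨p, fun s => ?_⟩
  rw [← hp s]
  show fF β k (s + c) = fF β k (c + s)
  congr 1; ring

/-- Rothe's first convolution identity. -/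
lemma rotheI (β : ℂ) : ∀ k : ℕ, ∀ t s : ℂ,
    ∑ i ∈ range (k+1), AF β i t * fF β (k-i) s = fF β k (t+s) := by
  intro k
  induction k with
  | zero => intro t s; simp
  | succ k IH =>
    -- the defect function
    set T : ℂ → ℂ → ℂ := fun t s =>
      (∑ i ∈ range (k+2), AF β i t * fF β (k+1-i) s) - fF β (k+1) (t+s) with hT
    have key : ∀ t s : ℂ, T t s = 0 := by
      have stepa : ∀ t s : ℂ, T t s = T t (s-1) := by
        intro t s
        have hsplit : ∀ s' : ℂ, ∑ i ∈ range (k+2), AF β i t * fF β (k+1-i) s'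
            = (∑ i ∈ range (k+1), AF β i t * fF β (k+1-i) s') + AF β (k+1) t := by
          intro s'
          rw [Finset.sum_range_succ]
          simp
        have hpas : ∑ i ∈ range (k+1), AF β i t * fF β (k+1-i) s
            = (∑ i ∈ range (k+1), AF β i t * fF β (k+1-i) (s-1))
              + ∑ i ∈ range (k+1), AF β i t * fF β (k-i) (s+β-1) := by
          rw [← Finset.sum_add_distrib]
          apply Finset.sum_congr rfl
          intro i hi
          have hik : i ≤ k := Nat.lt_succ_iff.mp (Finset.mem_range.mp hi)
          have h1 : k + 1 - i = (k - i) + 1 := by omega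
          rw [h1, fF_pascal β (k-i) s]
          ring
        have hIH := IH t (s + β - 1)
        have hpas2 : fF β (k+1) (t+s) = fF β (k+1) (t+(s-1)) + fF β k (t+(s+β-1)) := by
          have := fF_pascal β k (t+s)
          have e1 : t + s - 1 = t + (s-1) := by ring
          have e2 : t + s + β - 1 = t + (s+β-1) := by ring
          rw [e1, e2] at this
          exact this
        rw [hT]
        simp only
        rw [hsplit s, hsplit (s-1), hpas, hIH, hpas2]
        ring
      have stepb : ∀ t s : ℂ, T t s = T (t-1) s := by
        intro t s
        have hsplit : ∀ t' : ℂ, ∑ i ∈ range (k+2), AF β i t' * fF β (k+1-i) s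
            = (∑ i ∈ range (k+1), AF β (i+1) t' * fF β (k-i) s) + fF β (k+1) s := by
          intro t'
          rw [Finset.sum_range_succ']
          simp
        have hrec : ∑ i ∈ range (k+1), AF β (i+1) t * fF β (k-i) s
            = (∑ i ∈ range (k+1), AF β (i+1) (t-1) * fF β (k-i) s)
              + ∑ i ∈ range (k+1), AF β i (t+β-1) * fF β (k-i) s := by
          rw [← Finset.sum_add_distrib]
          apply Finset.sum_congr rfl
          intro i hi
          rw [AF_rec β i t]
          ring
        have hIH := IH (t + β - 1) s
        have hpas2 : fF β (k+1) (t+s) = fF β (k+1) ((t-1)+s) + fF β k ((t+β-1)+s) := by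
          have := fF_pascal β k (t+s)
          have e1 : t + s - 1 = (t-1) + s := by ring
          have e2 : t + s + β - 1 = (t+β-1) + s := by ring
          rw [e1, e2] at this
          exact this
        rw [hT]
        simp only
        rw [hsplit t, hsplit (t-1), hrec, hIH, hpas2]
        ring
      -- T t · is a polynomial function, 1-periodic, hence constant
      have hpolys : ∀ t : ℂ, IsPolyFun (fun s => T t s) := by
        intro t
        apply IsPolyFun.sub
        · exact IsPolyFun.sum _ _ (fun i _ =>
            (IsPolyFun.const (AF β i t)).mul (isPolyFun_fF β (k+1-i)))
        · exact isPolyFun_fF_shift β (k+1) t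
      have hpolyt : IsPolyFun (fun t => T t 0) := by
        apply IsPolyFun.sub
        · exact IsPolyFun.sum _ _ (fun i _ =>
            (isPolyFun_AF β i).mul (IsPolyFun.const (fF β (k+1-i) 0)))
        · exact isPolyFun_fF_shift' β (k+1) 0
      have hs0 : ∀ t s : ℂ, T t s = T t 0 :=
        fun t s => (hpolys t).const_of_periodic (fun s' => stepa t s') s
      have ht0 : ∀ t : ℂ, T t 0 = T 0 0 :=
        hpolyt.const_of_periodic (fun t' => stepb t' 0)
      have hT00 : T 0 0 = 0 := by
        rw [hT]
        simp only
        rw [Finset.sum_range_succ']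
        have : ∀ i ∈ range (k+1), AF β (i+1) (0:ℂ) * fF β (k+1-(i+1)) 0 = 0 := by
          intro i _
          rw [AF_eval_zero]
          ring
        rw [Finset.sum_congr rfl this]
        simp
      intro t s
      rw [hs0 t s, ht0 t, hT00]
    intro t s
    have := key t s
    rw [hT] at this
    simp only at this
    exact sub_eq_zero.mp this


/-- Rothe's second convolution identity. -/
lemma rotheII (β : ℂ) (k : ℕ) (t s : ℂ) :
    ∑ i ∈ range (k+1), AF β i t * AF β (k-i) s = AF β k (t+s) := by
  cases k with
  | zero => simp
  | succ k =>
    have h1 : ∑ i ∈ range (k+2), AF β i t * AF β (k+1-i) s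
        = (∑ i ∈ range (k+1), AF β i t * AF β (k+1-i) s) + AF β (k+1) t := by
      rw [Finset.sum_range_succ]; simp
    have h2 : ∑ i ∈ range (k+1), AF β i t * AF β (k+1-i) s
        = (∑ i ∈ range (k+1), AF β i t * fF β (k+1-i) s)
          - β * ∑ i ∈ range (k+1), AF β i t * fF β (k-i) (s+β-1) := by
      rw [Finset.mul_sum, ← Finset.sum_sub_distrib]
      apply Finset.sum_congr rfl
      intro i hi
      have hik : i ≤ k := Nat.lt_succ_iff.mp (Finset.mem_range.mp hi)
      have e : k + 1 - i = (k - i) + 1 := by omega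
      rw [e]
      show AF β i t * (fF β (k-i+1) s - β * fF β (k-i) (s + β - 1)) = _
      ring
    have h3 : ∑ i ∈ range (k+2), AF β i t * fF β (k+1-i) s = fF β (k+1) (t+s) :=
      rotheI β (k+1) t s
    have h5 := Finset.sum_range_succ (fun i => AF β i t * fF β (k+1-i) s) (k+1)
    simp only [Nat.sub_self, fF_zero, mul_one] at h5
    have h4 := rotheI β k t (s + β - 1)
    have e4 : t + (s + β - 1) = (t + s) + β - 1 := by ring
    rw [e4] at h4
    rw [h1, h2, h4]
    show _ = fF β (k+1) (t+s) - β * fF β k (t + s + β - 1)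
    linear_combination h3 - h5

/-- Shift identity: `A_{k+1}(1) = A_k(β)`. -/
lemma AF_shift (β : ℂ) (k : ℕ) : AF β (k+1) 1 = AF β k β := by
  cases k with
  | zero => simp [AF_one]
  | succ m =>
    rw [AF_prod β (m+1) 1, AF_prod β m β]
    have key : ∏ j ∈ range (m+1), ((1:ℂ) + β * (((m+1:ℕ):ℂ) + 1) - 1 - (j:ℂ))
        = (β * ((m:ℂ) + 2)) * ∏ j ∈ range m, (β + β * ((m:ℂ)+1) - 1 - (j:ℂ)) := by
      rw [Finset.prod_range_succ']
      have g0 : (1:ℂ) + β * (((m+1:ℕ):ℂ) + 1) - 1 - ((0:ℕ):ℂ) = β * ((m:ℂ)+2) := by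
        push_cast; ring
      rw [g0, mul_comm]
      congr 1
      apply Finset.prod_congr rfl
      intro j _
      push_cast
      ring
    have hcast : ∏ j ∈ range m, (β + β * (((m:ℕ):ℂ) + 1) - 1 - (j:ℂ))
        = ∏ j ∈ range m, (β + β * ((m:ℂ)+1) - 1 - (j:ℂ)) := rfl
    rw [key]
    have hfs : (Nat.factorial (m+1+1) : ℂ) = ((m:ℂ)+2) * (Nat.factorial (m+1) : ℂ) := by
      push_cast [Nat.factorial_succ]; ring
    rw [hfs]
    have hm2 : ((m:ℂ)+2) ≠ 0 := by
      have h := Nat.cast_ne_zero (R := ℂ).mpr (show m+2 ≠ 0 by omega)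
      push_cast at h; exact h
    have hf : (Nat.factorial (m+1) : ℂ) ≠ 0 := factorial_ne' (m+1)
    field_simp


lemma pow_self_le_exp_mul_factorial : ∀ k : ℕ, ((k:ℝ))^k ≤ (Real.exp 1)^k * (Nat.factorial k) := by
  intro k
  induction k with
  | zero => simp
  | succ m IH =>
    have hstep : ((m:ℝ)+1)^m ≤ Real.exp 1 * (m:ℝ)^m := by
      rcases Nat.eq_zero_or_pos m with hm | hm
      · subst hm; simpa using Real.one_le_exp (by norm_num : (0:ℝ) ≤ 1)
      · have hmpos : (0:ℝ) < m := by exact_mod_cast hm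
        have h1 : ((m:ℝ)+1) = (m:ℝ) * (1 + 1/m) := by field_simp
        have h2 : (1 + 1/(m:ℝ)) ≤ Real.exp (1/m) := by
          have := Real.add_one_le_exp (1/(m:ℝ))
          linarith
        have h3 : ((m:ℝ)+1)^m = (m:ℝ)^m * (1+1/(m:ℝ))^m := by
          rw [h1, mul_pow]
        have h4 : (1+1/(m:ℝ))^m ≤ (Real.exp (1/m))^m := by
          apply pow_le_pow_left₀ (by positivity) h2
        have h5 : (Real.exp (1/(m:ℝ)))^m = Real.exp 1 := by
          rw [← Real.exp_nat_mul]
          congr 1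
          field_simp
        rw [h3]
        calc (m:ℝ)^m * (1+1/(m:ℝ))^m ≤ (m:ℝ)^m * Real.exp 1 := by
              apply mul_le_mul_of_nonneg_left _ (by positivity)
              rw [← h5]; exact h4
          _ = Real.exp 1 * (m:ℝ)^m := by ring
    have hcast : ((m+1:ℕ):ℝ) = (m:ℝ)+1 := by push_cast; ring
    rw [hcast]
    have hfs : ((Nat.factorial (m+1) : ℕ):ℝ) = ((m:ℝ)+1) * (Nat.factorial m : ℝ) := by
      push_cast [Nat.factorial_succ]; ring
    rw [hfs]
    have e1 : ((m:ℝ)+1)^(m+1) = ((m:ℝ)+1) * ((m:ℝ)+1)^m := by ring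
    rw [e1]
    have hexp1 : (1:ℝ) ≤ Real.exp 1 := Real.one_le_exp (by norm_num)
    calc ((m:ℝ)+1) * ((m:ℝ)+1)^m ≤ ((m:ℝ)+1) * (Real.exp 1 * (m:ℝ)^m) := by
          apply mul_le_mul_of_nonneg_left hstep (by positivity)
      _ ≤ ((m:ℝ)+1) * (Real.exp 1 * ((Real.exp 1)^m * (Nat.factorial m))) := by
          apply mul_le_mul_of_nonneg_left _ (by positivity)
          exact mul_le_mul_of_nonneg_left IH (by positivity)
      _ = (Real.exp 1)^(m+1) * (((m:ℝ)+1) * (Nat.factorial m)) := by ring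

lemma norm_AF_le (b : ℝ) (hb0 : 0 ≤ b) (hb1 : b ≤ 1) (u : ℂ) (hu : ‖u‖ ≤ 1) (k : ℕ) :
    ‖AF (b:ℂ) k u‖ ≤ (2*(k:ℝ))^k / (Nat.factorial k : ℝ) := by
  cases k with
  | zero => simp
  | succ m =>
    rw [AF_prod]
    rw [norm_div, norm_mul, norm_prod]
    have hfn : ‖((Nat.factorial (m+1) : ℕ) : ℂ)‖ = (Nat.factorial (m+1) : ℝ) := by
      simp [Complex.norm_natCast]
    rw [hfn]
    have hterm : ∀ j ∈ range m, ‖u + (b:ℂ) * (((m:ℕ):ℂ)+1) - 1 - (j:ℂ)‖ ≤ 2*((m:ℝ)+1) := by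
      intro j hj
      have hjm : (j:ℝ) ≤ (m:ℝ) - 1 := by
        have := Finset.mem_range.mp hj
        have : (j:ℝ) ≤ (m:ℝ) - 1 := by
          have hj' : j + 1 ≤ m := this
          have := (Nat.cast_le (α := ℝ)).mpr hj'
          push_cast at this; linarith
        exact this
      have heq : (b:ℂ) * (((m:ℕ):ℂ)+1) - 1 - (j:ℂ) = ((b * ((m:ℝ)+1) - 1 - j : ℝ) : ℂ) := by
        push_cast; ring
      have : ‖u + (b:ℂ) * (((m:ℕ):ℂ)+1) - 1 - (j:ℂ)‖
          ≤ ‖u‖ + ‖((b * ((m:ℝ)+1) - 1 - j : ℝ) : ℂ)‖ := by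
        rw [show u + (b:ℂ) * (((m:ℕ):ℂ)+1) - 1 - (j:ℂ)
            = u + ((b:ℂ) * (((m:ℕ):ℂ)+1) - 1 - (j:ℂ)) from by ring, heq]
        exact norm_add_le _ _
      refine this.trans ?_
      rw [Complex.norm_real]
      have habs : |b * ((m:ℝ)+1) - 1 - j| ≤ (m:ℝ) + 1 := by
        rw [abs_le]
        constructor
        · nlinarith [Nat.cast_nonneg (α := ℝ) j, Nat.cast_nonneg (α := ℝ) m]
        · nlinarith [Nat.cast_nonneg (α := ℝ) j, Nat.cast_nonneg (α := ℝ) m]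
      rw [Real.norm_eq_abs]
      linarith
    have hprod : ∏ j ∈ range m, ‖u + (b:ℂ) * (((m:ℕ):ℂ)+1) - 1 - (j:ℂ)‖
        ≤ (2*((m:ℝ)+1))^m := by
      calc ∏ j ∈ range m, ‖u + (b:ℂ) * (((m:ℕ):ℂ)+1) - 1 - (j:ℂ)‖
          ≤ ∏ _j ∈ range m, (2*((m:ℝ)+1)) :=
            Finset.prod_le_prod (fun j _ => norm_nonneg _) hterm
        _ = (2*((m:ℝ)+1))^m := by rw [Finset.prod_const, Finset.card_range]
    have hcast : (2*((m+1:ℕ):ℝ)) = 2*((m:ℝ)+1) := by push_cast; ring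
    rw [hcast]
    have hfpos : (0:ℝ) < (Nat.factorial (m+1) : ℝ) := by
      exact_mod_cast Nat.factorial_pos (m+1)
    rw [div_le_div_iff₀ hfpos hfpos]
    have h2m : (1:ℝ) ≤ 2*((m:ℝ)+1) := by
      have : (0:ℝ) ≤ (m:ℝ) := Nat.cast_nonneg m
      linarith
    calc (‖u‖ * ∏ j ∈ range m, ‖u + (b:ℂ) * (((m:ℕ):ℂ)+1) - 1 - (j:ℂ)‖) * (Nat.factorial (m+1):ℝ)
        ≤ 1 * (2*((m:ℝ)+1))^m * (Nat.factorial (m+1):ℝ) := by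
          apply mul_le_mul_of_nonneg_right _ hfpos.le
          apply mul_le_mul hu hprod (Finset.prod_nonneg (fun j _ => norm_nonneg _)) (by norm_num)
      _ ≤ (2*((m:ℝ)+1))^(m+1) * (Nat.factorial (m+1):ℝ) := by
          apply mul_le_mul_of_nonneg_right _ hfpos.le
          rw [one_mul, pow_succ]
          nlinarith [pow_nonneg (by linarith : (0:ℝ) ≤ 2*((m:ℝ)+1)) m]

lemma norm_AF_le' (b : ℝ) (hb0 : 0 ≤ b) (hb1 : b ≤ 1) (u : ℂ) (hu : ‖u‖ ≤ 1) (k : ℕ) :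
    ‖AF (b:ℂ) k u‖ ≤ (2 * Real.exp 1)^k := by
  refine (norm_AF_le b hb0 hb1 u hu k).trans ?_
  have h1 : (2*(k:ℝ))^k = 2^k * (k:ℝ)^k := by rw [mul_pow]
  have h2 : ((k:ℝ))^k ≤ (Real.exp 1)^k * (Nat.factorial k : ℝ) := pow_self_le_exp_mul_factorial k
  have hfpos : (0:ℝ) < (Nat.factorial k : ℝ) := by exact_mod_cast Nat.factorial_pos k
  rw [div_le_iff₀ hfpos, h1, mul_pow]
  calc 2^k * (k:ℝ)^k ≤ 2^k * ((Real.exp 1)^k * (Nat.factorial k : ℝ)) := by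
        apply mul_le_mul_of_nonneg_left h2 (by positivity)
    _ = 2^k * (Real.exp 1)^k * (Nat.factorial k : ℝ) := by ring


/-- The general term of the Mellin-type series. -/
noncomputable def gg (β x u : ℂ) (k : ℕ) : ℂ := (-1)^k * AF β k u * x^k

lemma norm_gg_le (b : ℝ) (hb0 : 0 ≤ b) (hb1 : b ≤ 1) {x : ℂ}
    (hx : ‖x‖ ≤ (4 * Real.exp 1)⁻¹) {u : ℂ} (hu : ‖u‖ ≤ 1) (k : ℕ) :
    ‖gg (b:ℂ) x u k‖ ≤ (1/2:ℝ)^k := by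
  unfold gg
  rw [norm_mul, norm_mul, norm_pow, norm_pow, norm_neg, norm_one, one_pow, one_mul]
  have hexp : (0:ℝ) < Real.exp 1 := Real.exp_pos 1
  calc ‖AF (b:ℂ) k u‖ * ‖x‖^k
      ≤ (2*Real.exp 1)^k * ((4*Real.exp 1)⁻¹)^k := by
        apply mul_le_mul (norm_AF_le' b hb0 hb1 u hu k)
          (pow_le_pow_left₀ (norm_nonneg _) hx k) (by positivity) (by positivity)
    _ = ((2*Real.exp 1) * (4*Real.exp 1)⁻¹)^k := (mul_pow _ _ _).symm
    _ = (1/2:ℝ)^k := by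
        congr 1
        field_simp
        ring
  
lemma summable_norm_gg (b : ℝ) (hb0 : 0 ≤ b) (hb1 : b ≤ 1) {x : ℂ}
    (hx : ‖x‖ ≤ (4 * Real.exp 1)⁻¹) {u : ℂ} (hu : ‖u‖ ≤ 1) :
    Summable (fun k => ‖gg (b:ℂ) x u k‖) := by
  apply Summable.of_nonneg_of_le (fun _ => norm_nonneg _) (norm_gg_le b hb0 hb1 hx hu)
  exact summable_geometric_of_lt_one (by norm_num) (by norm_num)

lemma summable_gg (b : ℝ) (hb0 : 0 ≤ b) (hb1 : b ≤ 1) {x : ℂ}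
    (hx : ‖x‖ ≤ (4 * Real.exp 1)⁻¹) {u : ℂ} (hu : ‖u‖ ≤ 1) :
    Summable (gg (b:ℂ) x u) :=
  (summable_norm_gg b hb0 hb1 hx hu).of_norm

/-- Cauchy product: multiplication of the series adds the parameters. -/
lemma tsum_gg_mul (b : ℝ) (hb0 : 0 ≤ b) (hb1 : b ≤ 1) {x : ℂ}
    (hx : ‖x‖ ≤ (4 * Real.exp 1)⁻¹) {u v : ℂ} (hu : ‖u‖ ≤ 1) (hv : ‖v‖ ≤ 1) :
    (∑' k, gg (b:ℂ) x u k) * (∑' k, gg (b:ℂ) x v k) = ∑' k, gg (b:ℂ) x (u+v) k := by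
  rw [tsum_mul_tsum_eq_tsum_sum_antidiagonal_of_summable_norm
    (summable_norm_gg b hb0 hb1 hx hu) (summable_norm_gg b hb0 hb1 hx hv)]
  apply tsum_congr
  intro m
  rw [Finset.Nat.sum_antidiagonal_eq_sum_range_succ_mk]
  have hterm : ∀ k ∈ range (m+1),
      gg (b:ℂ) x u k * gg (b:ℂ) x v (m-k)
        = ((-1)^m * x^m) * (AF (b:ℂ) k u * AF (b:ℂ) (m-k) v) := by
    intro k hk
    have hkm : k ≤ m := Nat.lt_succ_iff.mp (Finset.mem_range.mp hk)
    have h1 : ((-1:ℂ))^k * (-1:ℂ)^(m-k) = (-1:ℂ)^m := by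
      rw [← pow_add, Nat.add_sub_cancel' hkm]
    have h2 : x^k * x^(m-k) = x^m := by
      rw [← pow_add, Nat.add_sub_cancel' hkm]
    unfold gg
    calc (-1:ℂ)^k * AF (b:ℂ) k u * x^k * ((-1:ℂ)^(m-k) * AF (b:ℂ) (m-k) v * x^(m-k))
        = ((-1:ℂ)^k * (-1:ℂ)^(m-k)) * (x^k * x^(m-k)) * (AF (b:ℂ) k u * AF (b:ℂ) (m-k) v) := by
          ring
      _ = ((-1)^m * x^m) * (AF (b:ℂ) k u * AF (b:ℂ) (m-k) v) := by rw [h1, h2]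
  rw [Finset.sum_congr rfl hterm, ← Finset.mul_sum, rotheII]
  unfold gg
  ring

/-- The functional equation `Γ(s+m) = (∏ (s+j)) Γ(s)`. -/
lemma Gamma_add_nat (m : ℕ) : ∀ (s : ℂ), (∀ j ∈ range m, s + j ≠ 0) →
    Complex.Gamma (s + m) = (∏ j ∈ range m, (s + j)) * Complex.Gamma s := by
  induction m with
  | zero => intro s _; simp
  | succ l IH =>
    intro s h
    have hcast : s + ((l+1:ℕ):ℂ) = (s + l) + 1 := by push_cast; ring
    rw [hcast, Complex.Gamma_add_one (s + l)
      (h l (Finset.mem_range.mpr (Nat.lt_succ_self l)))]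
    rw [IH s (fun j hj => h j (Finset.mem_range.mpr
      (Nat.lt_succ_of_lt (Finset.mem_range.mp hj))))]
    rw [Finset.prod_range_succ]
    ring


lemma hodd_aux (n : ℕ) (hn : 2 ≤ n) (K J : ℕ) :
    1/(2*(n:ℂ)) - (K:ℂ)/(n:ℂ) + 1 + (J:ℂ) ≠ 0 := by
  have hNne : (n:ℂ) ≠ 0 := Nat.cast_ne_zero.mpr (by omega)
  intro h
  have h2 : (1/(2*(n:ℂ)) - (K:ℂ)/(n:ℂ) + 1 + (J:ℂ)) * (2*(n:ℂ))
      = 1 - 2*(K:ℂ) + 2*(n:ℂ) + 2*(n:ℂ)*(J:ℂ) := by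
    field_simp
  rw [h, zero_mul] at h2
  have h3 : ((1 - 2*(K:ℤ) + 2*(n:ℤ) + 2*(n:ℤ)*(J:ℤ) : ℤ) : ℂ) = 0 := by
    push_cast
    linear_combination -h2
  have h4 : (1 - 2*(K:ℤ) + 2*(n:ℤ) + 2*(n:ℤ)*(J:ℤ) : ℤ) = 0 := by exact_mod_cast h3
  have h5 : (2:ℤ) ∣ 1 := ⟨(K:ℤ) - n - n*J, by linarith⟩
  norm_num at h5

lemma a_eq_gg (n : ℕ) (hn : 2 ≤ n) (x : ℂ) (k : ℕ) :
    (1 / (2 * (n : ℂ))) * (-1 : ℂ) ^ k *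
      Complex.Gamma (1 / (2 * (n : ℂ)) + ((n : ℂ) - 1) * (k : ℂ) / (n : ℂ)) *
      (Complex.Gamma (1 / (2 * (n : ℂ)) - (k : ℂ) / (n : ℂ) + 1))⁻¹ *
      x ^ k / (Nat.factorial k : ℂ)
    = gg (((n:ℂ) - 1)/(n:ℂ)) x (1/(2*(n:ℂ))) k := by
  have hNne : (n:ℂ) ≠ 0 := Nat.cast_ne_zero.mpr (by omega)
  have hu₀ne : 1/(2*(n:ℂ)) ≠ 0 := by
    apply one_div_ne_zero
    intro h
    apply hNne
    have : (2:ℂ) ≠ 0 := by norm_num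
    field_simp at h
    exact (mul_eq_zero.mp h).resolve_left this
  cases k with
  | zero =>
    have harg1 : 1 / (2 * (n : ℂ)) + ((n : ℂ) - 1) * ((0:ℕ):ℂ) / (n : ℂ) = 1/(2*(n:ℂ)) := by
      push_cast; ring
    have harg2 : 1 / (2 * (n : ℂ)) - ((0:ℕ):ℂ) / (n : ℂ) + 1 = 1/(2*(n:ℂ)) + 1 := by
      push_cast; ring
    rw [harg1, harg2, Complex.Gamma_add_one _ hu₀ne]
    have hGne : Complex.Gamma (1/(2*(n:ℂ))) ≠ 0 := by
      apply Complex.Gamma_ne_zero_of_re_pos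
      have : (1/(2*(n:ℂ))) = (((1/(2*(n:ℝ))):ℝ):ℂ) := by push_cast; ring
      rw [this, Complex.ofReal_re]
      have : (0:ℝ) < n := by exact_mod_cast (by omega : 0 < n)
      positivity
    show _ = (-1:ℂ)^0 * AF _ 0 _ * x^0
    rw [AF_zero]
    simp only [pow_zero, Nat.factorial_zero, Nat.cast_one]
    field_simp
  | succ l =>
    set N := (n:ℂ) with hNdef
    set u₀ : ℂ := 1/(2*N) with hu₀def
    set β : ℂ := (N-1)/N with hβdef
    set ck : ℂ := u₀ - ((l+1:ℕ):ℂ)/N + 1 with hckdef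
    have hnonv : ∀ j ∈ range l, ck + (j:ℂ) ≠ 0 := by
      intro j _
      exact hodd_aux n hn (l+1) j
    have hGck : Complex.Gamma ck ≠ 0 := by
      apply Complex.Gamma_ne_zero
      intro m heq
      apply hodd_aux n hn (l+1) m
      show ck + (m:ℂ) = 0
      rw [heq]
      ring
    have harg : u₀ + (N - 1) * ((l+1:ℕ):ℂ) / N = ck + ((l:ℕ):ℂ) := by
      rw [hckdef]
      field_simp
      push_cast
      ring
    have hG := Gamma_add_nat l ck hnonv
    have prodeq : ∏ j ∈ range l, (ck + (j:ℂ))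
        = ∏ j ∈ range l, (u₀ + β*((l:ℂ)+1) - 1 - (j:ℂ)) := by
      rw [← Finset.prod_range_reflect (fun j => u₀ + β*((l:ℂ)+1) - 1 - (j:ℂ)) l]
      apply Finset.prod_congr rfl
      intro j hj
      symm
      have hj' : j < l := Finset.mem_range.mp hj
      have hsum : (l - 1 - j) + (j + 1) = l := by omega
      have hcast : ((l - 1 - j : ℕ) : ℂ) = (l:ℂ) - 1 - (j:ℂ) := by
        have hc := congrArg (fun m : ℕ => (m:ℂ)) hsum
        push_cast at hc
        linear_combination hc
      show u₀ + β*((l:ℂ)+1) - 1 - ((l - 1 - j : ℕ):ℂ) = ck + (j:ℂ)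
      rw [hcast, hckdef, hβdef]
      field_simp
      push_cast
      ring
    show _ = (-1:ℂ)^(l+1) * AF β (l+1) u₀ * x^(l+1)
    rw [AF_prod]
    have hstmt1 : 1 / (2 * (n : ℂ)) + ((n : ℂ) - 1) * (((l+1:ℕ)):ℂ) / (n : ℂ)
        = ck + ((l:ℕ):ℂ) := harg
    rw [hstmt1, hG, prodeq]
    have hfne : ((Nat.factorial (l+1) : ℕ) : ℂ) ≠ 0 := factorial_ne' (l+1)
    field_simp

end MellinAux


open MellinAux in
/-- Mellin's series for the square root of the principal root of the trinomial equation
`zⁿ + x·z^{n-1} - 1 = 0`: for `|x|` small enough the series with general term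
`(1/(2n))·(-1)^k·Γ(1/(2n) + (n-1)k/n)·(Γ(1/(2n) - k/n + 1))⁻¹·x^k/k!` is summable, and the
square of its sum is a root of the trinomial equation. -/
theorem mellin_series_sqrt_trinomial (n : ℕ) (hn : 2 ≤ n) :
    ∃ ε > (0 : ℝ), ∀ x : ℂ, ‖x‖ < ε →
      let a : ℕ → ℂ := fun k =>
        (1 / (2 * (n : ℂ))) * (-1 : ℂ) ^ k *
          Complex.Gamma (1 / (2 * (n : ℂ)) + ((n : ℂ) - 1) * (k : ℂ) / (n : ℂ)) *
          (Complex.Gamma (1 / (2 * (n : ℂ)) - (k : ℂ) / (n : ℂ) + 1))⁻¹ *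
          x ^ k / (Nat.factorial k : ℂ)
      Summable a ∧
        ((∑' k : ℕ, a k) ^ 2) ^ n + x * ((∑' k : ℕ, a k) ^ 2) ^ (n - 1) - 1 = 0 := by
  have hexp : (0:ℝ) < Real.exp 1 := Real.exp_pos 1
  refine ⟨(4 * Real.exp 1)⁻¹, by positivity, ?_⟩
  intro x hx
  intro a
  have hNne : (n:ℂ) ≠ 0 := Nat.cast_ne_zero.mpr (by omega)
  have ha : a = gg (((n:ℂ)-1)/(n:ℂ)) x (1/(2*(n:ℂ))) := by
    funext k
    exact a_eq_gg n hn x k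
  have hnR : (0:ℝ) < (n:ℝ) := by exact_mod_cast (by omega : 0 < n)
  set b : ℝ := ((n:ℝ) - 1)/(n:ℝ) with hbdef
  have hn1 : (1:ℝ) ≤ (n:ℝ) := by exact_mod_cast (by omega : 1 ≤ n)
  have hb0 : 0 ≤ b := by
    rw [hbdef]
    apply div_nonneg _ hnR.le
    linarith
  have hb1 : b ≤ 1 := by
    rw [hbdef, div_le_one hnR]
    linarith
  have hβ : (((n:ℂ)-1)/(n:ℂ)) = ((b:ℝ):ℂ) := by rw [hbdef]; push_cast; ring
  rw [hβ] at ha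
  have hx' : ‖x‖ ≤ (4*Real.exp 1)⁻¹ := le_of_lt hx
  have hnormdiv : ∀ m : ℕ, m ≤ n → ‖(m:ℂ)/(n:ℂ)‖ ≤ 1 := by
    intro m hm
    rw [norm_div]
    rw [Complex.norm_natCast, Complex.norm_natCast]
    rw [div_le_one hnR]
    exact_mod_cast hm
  have hu₀ : ‖1/(2*(n:ℂ))‖ ≤ 1 := by
    have h1 : (1/(2*(n:ℂ))) = ((1:ℕ):ℂ)/((2*n:ℕ):ℂ) := by push_cast; ring
    rw [h1, norm_div, Complex.norm_natCast, Complex.norm_natCast]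
    rw [div_le_one (by exact_mod_cast (by omega : 0 < 2*n))]
    exact_mod_cast (by omega : 1 ≤ 2*n)
  have hnorm1 : ‖(1:ℂ)/(n:ℂ)‖ ≤ 1 := by
    have h1 : ((1:ℂ)/(n:ℂ)) = ((1:ℕ):ℂ)/((n:ℕ):ℂ) := by push_cast; ring
    rw [h1]
    exact hnormdiv 1 (by omega)
  have hβnorm : ‖((b:ℝ):ℂ)‖ ≤ 1 := by
    rw [Complex.norm_real, Real.norm_eq_abs, abs_le]
    constructor <;> linarith
  have hsummable : Summable a := by
    rw [ha]
    exact summable_gg b hb0 hb1 hx' hu₀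
  refine ⟨hsummable, ?_⟩
  rw [ha]
  have hsq : (∑' k, gg ((b:ℝ):ℂ) x (1/(2*(n:ℂ))) k)^2
      = ∑' k, gg ((b:ℝ):ℂ) x ((1:ℂ)/(n:ℂ)) k := by
    rw [pow_two, tsum_gg_mul b hb0 hb1 hx' hu₀ hu₀]
    congr 1
    field_simp
    ring
  rw [hsq]
  have hpow : ∀ m : ℕ, 1 ≤ m → m ≤ n →
      (∑' k, gg ((b:ℝ):ℂ) x ((1:ℂ)/(n:ℂ)) k)^m = ∑' k, gg ((b:ℝ):ℂ) x ((m:ℂ)/(n:ℂ)) k := by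
    intro m
    induction m with
    | zero => omega
    | succ p IH =>
      intro _ hmn
      rcases Nat.eq_zero_or_pos p with hp | hp
      · subst hp
        rw [pow_one]
        norm_num
      · have hIH := IH (by omega) (by omega)
        rw [pow_succ, hIH, tsum_gg_mul b hb0 hb1 hx' (hnormdiv p (by omega)) hnorm1]
        congr 1
        push_cast
        ring
  rw [hpow n (by omega) le_rfl, hpow (n-1) (by omega) (by omega)]
  have harg1 : ((n:ℕ):ℂ)/(n:ℂ) = 1 := div_self hNne
  have harg2 : (((n-1:ℕ)):ℂ)/(n:ℂ) = ((b:ℝ):ℂ) := by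
    rw [hbdef]
    push_cast [Nat.cast_sub (by omega : 1 ≤ n)]
    ring
  rw [harg1, harg2]
  have h1sum : Summable (gg ((b:ℝ):ℂ) x (1:ℂ)) :=
    summable_gg b hb0 hb1 hx' (by rw [norm_one])
  have hzero : ∑' k, gg ((b:ℝ):ℂ) x 1 k = 1 + ∑' k, gg ((b:ℝ):ℂ) x 1 (k+1) := by
    rw [Summable.tsum_eq_zero_add h1sum]
    congr 1
    simp [gg]
  have hterm : ∀ k, x * gg ((b:ℝ):ℂ) x ((b:ℝ):ℂ) k = -(gg ((b:ℝ):ℂ) x 1 (k+1)) := by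
    intro k
    unfold gg
    rw [AF_shift]
    rw [pow_succ, pow_succ]
    ring
  have hxS : x * ∑' k, gg ((b:ℝ):ℂ) x ((b:ℝ):ℂ) k = -(∑' k, gg ((b:ℝ):ℂ) x 1 (k+1)) := by
    rw [← tsum_mul_left, tsum_congr hterm, tsum_neg]
  rw [hzero, hxS]
  ring
end

section
/- (Integrability of Mikhalkin's integrand.) Let n ≥ 3 and p ≥ 1 be natural numbers and let n₁, …, n_p be natural numbers with 0 < n_k ≤ n − 2 for each k; write n′_k = n − n_k. Let x = (x₁, …, x_p) ∈ ℂᵖ be such that for every t ∈ [0,1], 1 + Σ_{k=1}^{p} y_k(t)·e^{−n′_kπi/n} ≠ 0 and 1 + Σ_{k=1}^{p} y_k(t)·e^{n′_kπi/n} ≠ 0, where y_k(t) = x_k · t^{n_k/n} · (1−t)^{n′_k/n} (real powers of t and 1−t). Then the complex-valued function t ↦ t^{(1−n)/n} · (1−t)^{−(1+n)/n} · [ e^{πi/n}·log(1 + Σ_{k=1}^{p} y_k(t)·e^{−n′_kπi/n}) − e^{−πi/n}·log(1 + Σ_{k=1}^{p} y_k(t)·e^{n′_kπi/n}) ] is interval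 integrable on [0,1] with respect to Lebesgue measure. -/
open MeasureTheory Set

/-- Beta-type integrability. -/
private lemma mik_beta_integrable {α : ℝ} (hα : -1 < α) :
    IntervalIntegrable (fun t : ℝ => t ^ α * (1 - t) ^ α) volume 0 1 := by
  have h1 : IntervalIntegrable (fun t : ℝ => t ^ α * (1 - t) ^ α) volume 0 (1/2) := by
    apply (intervalIntegral.intervalIntegrable_rpow' hα).mul_continuousOn
    intro t ht
    rw [Set.uIcc_of_le (by norm_num : (0:ℝ) ≤ 1/2)] at ht
    have hne : (1:ℝ) - t ≠ 0 := by
      have := ht.2; intro h; linarith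
    exact (((continuous_const.sub continuous_id).continuousAt (x := t)).rpow_const
      (Or.inl hne)).continuousWithinAt
  have h2 : IntervalIntegrable (fun t : ℝ => t ^ α * (1 - t) ^ α) volume (1/2) 1 := by
    have h3 := h1.comp_sub_left 1
    have h4 : (fun x : ℝ => (fun t : ℝ => t ^ α * (1 - t) ^ α) (1 - x)) =
        fun x : ℝ => x ^ α * (1 - x) ^ α := by
      funext x
      show (1 - x) ^ α * (1 - (1 - x)) ^ α = x ^ α * (1 - x) ^ α
      rw [sub_sub_cancel]; ring
    rw [h4] at h3
    norm_num at h3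
    exact h3.symm
  exact h1.trans h2

private lemma mik_norm_log_le (w : ℂ) : ‖Complex.log w‖ ≤ |Real.log ‖w‖| + Real.pi := by
  rw [Complex.log]
  refine (norm_add_le _ _).trans (add_le_add ?_ ?_)
  · rw [Complex.norm_real, Real.norm_eq_abs]
  · rw [norm_mul, Complex.norm_I, mul_one, Complex.norm_real, Real.norm_eq_abs]
    exact Complex.abs_arg_le_pi w

private lemma mik_log_le_of_bounds {M L s : ℝ} (hM : 0 ≤ M) (hL : 0 ≤ L) (hs : 0 ≤ s) {z : ℂ}
    (hz : ‖z‖ ≤ M * s) (hlog : ‖Complex.log (1 + z)‖ ≤ L) :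
    ‖Complex.log (1 + z)‖ ≤ (3/2 * M + 2 * M * L) * s := by
  rcases le_or_gt ‖z‖ (1/2) with h | h
  · calc ‖Complex.log (1 + z)‖ ≤ 3/2 * ‖z‖ := Complex.norm_log_one_add_half_le_self h
      _ ≤ 3/2 * (M * s) := by nlinarith
      _ ≤ (3/2 * M + 2 * M * L) * s := by nlinarith [mul_nonneg (mul_nonneg hM hL) hs]
  · have h1 : 1/2 < M * s := lt_of_lt_of_le h hz
    calc ‖Complex.log (1 + z)‖ ≤ L := hlog
      _ ≤ L * (2 * (M * s)) := by nlinarith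
      _ ≤ (3/2 * M + 2 * M * L) * s := by nlinarith [mul_nonneg hM hs]

private lemma mik_cont (n p : ℕ) (hn : 3 ≤ n) (nk : Fin p → ℕ)
    (hnk : ∀ i, 0 < nk i ∧ nk i ≤ n - 2) (x : Fin p → ℂ) (e : Fin p → ℂ) :
    Continuous (fun t : ℝ => 1 + ∑ i, x i * ((t ^ ((nk i : ℝ) / (n : ℝ)) : ℝ) : ℂ) *
        (((1 - t) ^ (((n : ℝ) - (nk i : ℝ)) / (n : ℝ)) : ℝ) : ℂ) * e i) := by
  have hn3 : (3:ℝ) ≤ n := by exact_mod_cast hn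
  refine continuous_const.add (continuous_finset_sum _ fun i _ => ?_)
  have hle : (nk i : ℝ) ≤ n := by
    have h2 : nk i ≤ n := le_trans (hnk i).2 (Nat.sub_le n 2)
    exact_mod_cast h2
  have h1 : Continuous fun t : ℝ => ((t ^ ((nk i : ℝ) / (n : ℝ)) : ℝ) : ℂ) :=
    Complex.continuous_ofReal.comp (Real.continuous_rpow_const (by positivity))
  have h2 : Continuous fun t : ℝ => (((1 - t) ^ (((n : ℝ) - (nk i : ℝ)) / (n : ℝ)) : ℝ) : ℂ) := by
    refine Complex.continuous_ofReal.comp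
      ((Real.continuous_rpow_const ?_).comp (continuous_const.sub continuous_id))
    have : (0:ℝ) < n := by linarith
    apply div_nonneg (by linarith) this.le
  exact ((continuous_const.mul h1).mul h2).mul continuous_const

private lemma mik_log_bound (n p : ℕ) (hn : 3 ≤ n) (nk : Fin p → ℕ)
    (hnk : ∀ i, 0 < nk i ∧ nk i ≤ n - 2) (x : Fin p → ℂ) (e : Fin p → ℂ)
    (he : ∀ i, ‖e i‖ = 1)
    (hne : ∀ t ∈ Set.Icc (0:ℝ) 1,
      (1 + ∑ i, x i * ((t ^ ((nk i : ℝ) / (n : ℝ)) : ℝ) : ℂ) *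
        (((1 - t) ^ (((n : ℝ) - (nk i : ℝ)) / (n : ℝ)) : ℝ) : ℂ) * e i) ≠ 0) :
    ∃ K : ℝ, 0 ≤ K ∧ ∀ t ∈ Set.Icc (0:ℝ) 1,
      ‖Complex.log (1 + ∑ i, x i * ((t ^ ((nk i : ℝ) / (n : ℝ)) : ℝ) : ℂ) *
        (((1 - t) ^ (((n : ℝ) - (nk i : ℝ)) / (n : ℝ)) : ℝ) : ℂ) * e i)‖
        ≤ K * (1 - t) ^ ((2:ℝ) / (n:ℝ)) := by
  have hn3 : (3:ℝ) ≤ n := by exact_mod_cast hn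
  have hn0 : (0:ℝ) < n := by linarith
  set w : ℝ → ℂ := fun t => 1 + ∑ i, x i * ((t ^ ((nk i : ℝ) / (n : ℝ)) : ℝ) : ℂ) *
        (((1 - t) ^ (((n : ℝ) - (nk i : ℝ)) / (n : ℝ)) : ℝ) : ℂ) * e i with hw
  set M : ℝ := ∑ i, ‖x i‖ with hMdef
  have hM : 0 ≤ M := Finset.sum_nonneg fun i _ => norm_nonneg _
  -- the bound on the sum
  have hzb : ∀ t ∈ Icc (0:ℝ) 1,
      ‖∑ i, x i * ((t ^ ((nk i : ℝ) / (n : ℝ)) : ℝ) : ℂ) *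
        (((1 - t) ^ (((n : ℝ) - (nk i : ℝ)) / (n : ℝ)) : ℝ) : ℂ) * e i‖
        ≤ M * (1 - t) ^ ((2:ℝ) / (n:ℝ)) := by
    intro t ht
    have h1t : (0:ℝ) ≤ 1 - t := by linarith [ht.2]
    calc ‖∑ i, x i * ((t ^ ((nk i : ℝ) / (n : ℝ)) : ℝ) : ℂ) *
        (((1 - t) ^ (((n : ℝ) - (nk i : ℝ)) / (n : ℝ)) : ℝ) : ℂ) * e i‖
        ≤ ∑ i, ‖x i * ((t ^ ((nk i : ℝ) / (n : ℝ)) : ℝ) : ℂ) *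
          (((1 - t) ^ (((n : ℝ) - (nk i : ℝ)) / (n : ℝ)) : ℝ) : ℂ) * e i‖ :=
        norm_sum_le _ _
      _ ≤ ∑ i, ‖x i‖ * (1 - t) ^ ((2:ℝ) / (n:ℝ)) := by
        refine Finset.sum_le_sum fun i _ => ?_
        have hki : (nk i : ℝ) + 2 ≤ n := by
          have h2 := (hnk i).2
          have : nk i + 2 ≤ n := by omega
          exact_mod_cast this
        rw [norm_mul, norm_mul, norm_mul, he i, mul_one, Complex.norm_real,
          Complex.norm_real, Real.norm_eq_abs, Real.norm_eq_abs,
          abs_of_nonneg (Real.rpow_nonneg ht.1 _), abs_of_nonneg (Real.rpow_nonneg h1t _)]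
        have hta : t ^ ((nk i : ℝ) / (n : ℝ)) ≤ 1 :=
          Real.rpow_le_one ht.1 ht.2 (by positivity)
        have hb0 : (0:ℝ) < ((n : ℝ) - (nk i : ℝ)) / (n : ℝ) := div_pos (by linarith) hn0
        have hc0 : (0:ℝ) < (2:ℝ) / (n:ℝ) := div_pos two_pos hn0
        have htb : (1 - t) ^ (((n : ℝ) - (nk i : ℝ)) / (n : ℝ))
            ≤ (1 - t) ^ ((2:ℝ) / (n:ℝ)) := by
          rcases eq_or_lt_of_le h1t with h0 | h0
          · rw [← h0, Real.zero_rpow hb0.ne', Real.zero_rpow hc0.ne']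
          · refine Real.rpow_le_rpow_of_exponent_ge h0 (by linarith [ht.1]) ?_
            rw [div_le_div_iff_of_pos_right hn0]
            linarith
        calc ‖x i‖ * t ^ ((nk i : ℝ) / (n : ℝ)) * (1 - t) ^ (((n : ℝ) - (nk i : ℝ)) / (n : ℝ))
            ≤ ‖x i‖ * 1 * (1 - t) ^ ((2:ℝ) / (n:ℝ)) :=
            mul_le_mul (mul_le_mul_of_nonneg_left hta (norm_nonneg _)) htb
              (Real.rpow_nonneg h1t _) (by positivity)
          _ = ‖x i‖ * (1 - t) ^ ((2:ℝ) / (n:ℝ)) := by ring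
      _ = M * (1 - t) ^ ((2:ℝ) / (n:ℝ)) := by rw [← Finset.sum_mul]
  -- uniform bound for the log on the compact interval
  have hwc : Continuous w := mik_cont n p hn nk hnk x e
  have hscont : ContinuousOn (fun t => |Real.log ‖w t‖| + Real.pi) (Icc (0:ℝ) 1) := by
    intro t ht
    have hwt : ‖w t‖ ≠ 0 := norm_ne_zero_iff.mpr (hne t ht)
    have c1 : ContinuousAt (fun t : ℝ => ‖w t‖) t := hwc.norm.continuousAt
    have c12 : ContinuousAt (fun t : ℝ => Real.log ‖w t‖) t := c1.log hwt
    exact (c12.abs.add continuousAt_const).continuousWithinAt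
  obtain ⟨t₀, ht₀, hmax⟩ := isCompact_Icc.exists_isMaxOn ⟨0, by norm_num⟩ hscont
  set L : ℝ := |Real.log ‖w t₀‖| + Real.pi with hLdef
  have hL : 0 ≤ L := add_nonneg (abs_nonneg _) Real.pi_pos.le
  refine ⟨3/2 * M + 2 * M * L, by positivity, fun t ht => ?_⟩
  have hlogle : ‖Complex.log (w t)‖ ≤ L := (mik_norm_log_le (w t)).trans (hmax ht)
  exact mik_log_le_of_bounds hM hL (Real.rpow_nonneg (by linarith [ht.2]) _)
    (hzb t ht) hlogle

/-- Integrability of Mikhalkin's integrand: if `x` lies outside the exceptional sets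
`Σ₋ ∪ Σ₊`, then the integrand of Mikhalkin's formula is interval integrable on `[0,1]`. -/
theorem mikhalkin_integrand_integrable (n p : ℕ) (hn : 3 ≤ n) (hp : 1 ≤ p)
    (nk : Fin p → ℕ) (hnk : ∀ i, 0 < nk i ∧ nk i ≤ n - 2) (x : Fin p → ℂ)
    (y : Fin p → ℝ → ℂ)
    (hy : ∀ i t, y i t =
      x i * ((t ^ ((nk i : ℝ) / (n : ℝ)) : ℝ) : ℂ) *
        (((1 - t) ^ (((n : ℝ) - (nk i : ℝ)) / (n : ℝ)) : ℝ) : ℂ))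
    (hminus : ∀ t ∈ Set.Icc (0 : ℝ) 1,
      1 + ∑ i, y i t *
        Complex.exp (-(((n : ℂ) - (nk i : ℂ)) * (Real.pi : ℂ) * Complex.I / (n : ℂ))) ≠ 0)
    (hplus : ∀ t ∈ Set.Icc (0 : ℝ) 1,
      1 + ∑ i, y i t *
        Complex.exp (((n : ℂ) - (nk i : ℂ)) * (Real.pi : ℂ) * Complex.I / (n : ℂ)) ≠ 0) :
    IntervalIntegrable (fun t : ℝ =>
      ((t ^ ((1 - (n : ℝ)) / (n : ℝ)) : ℝ) : ℂ) *
        (((1 - t) ^ (-(1 + (n : ℝ)) / (n : ℝ)) : ℝ) : ℂ) *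
        (Complex.exp ((Real.pi : ℂ) * Complex.I / (n : ℂ)) *
            Complex.log (1 + ∑ i, y i t *
              Complex.exp (-(((n : ℂ) - (nk i : ℂ)) * (Real.pi : ℂ) * Complex.I / (n : ℂ)))) -
          Complex.exp (-((Real.pi : ℂ) * Complex.I / (n : ℂ))) *
            Complex.log (1 + ∑ i, y i t *
              Complex.exp (((n : ℂ) - (nk i : ℂ)) * (Real.pi : ℂ) * Complex.I / (n : ℂ)))))
      MeasureTheory.volume 0 1 := by
  have hn3 : (3:ℝ) ≤ n := by exact_mod_cast hn
  have hn0 : (0:ℝ) < n := by linarith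
  simp only [hy] at hminus hplus ⊢
  -- norms of exponentials are 1
  have hexp : ∀ r : ℝ, ‖Complex.exp ((r:ℂ) * Complex.I)‖ = 1 := fun r => by
    rw [Complex.norm_exp_ofReal_mul_I]
  have he₁ : ∀ i : Fin p,
      ‖Complex.exp (-(((n : ℂ) - (nk i : ℂ)) * (Real.pi : ℂ) * Complex.I / (n : ℂ)))‖ = 1 := by
    intro i
    have h : (-(((n : ℂ) - (nk i : ℂ)) * (Real.pi : ℂ) * Complex.I / (n : ℂ)))
        = ((-(((n:ℝ) - (nk i : ℝ)) * Real.pi / (n:ℝ)) : ℝ) : ℂ) * Complex.I := by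
      push_cast; ring
    rw [h, hexp]
  have he₂ : ∀ i : Fin p,
      ‖Complex.exp ((((n : ℂ) - (nk i : ℂ)) * (Real.pi : ℂ) * Complex.I / (n : ℂ)))‖ = 1 := by
    intro i
    have h : ((((n : ℂ) - (nk i : ℂ)) * (Real.pi : ℂ) * Complex.I / (n : ℂ)))
        = (((((n:ℝ) - (nk i : ℝ)) * Real.pi / (n:ℝ)) : ℝ) : ℂ) * Complex.I := by
      push_cast; ring
    rw [h, hexp]
  have hepi : ‖Complex.exp ((Real.pi : ℂ) * Complex.I / (n : ℂ))‖ = 1 := by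
    have h : ((Real.pi : ℂ) * Complex.I / (n : ℂ)) = (((Real.pi / (n:ℝ)) : ℝ) : ℂ) * Complex.I := by
      push_cast; ring
    rw [h, hexp]
  have hepi' : ‖Complex.exp (-((Real.pi : ℂ) * Complex.I / (n : ℂ)))‖ = 1 := by
    have h : (-((Real.pi : ℂ) * Complex.I / (n : ℂ)))
        = (((-(Real.pi / (n:ℝ))) : ℝ) : ℂ) * Complex.I := by
      push_cast; ring
    rw [h, hexp]
  obtain ⟨K₁, hK₁0, hK₁⟩ := mik_log_bound n p hn nk hnk x
    (fun i => Complex.exp (-(((n : ℂ) - (nk i : ℂ)) * (Real.pi : ℂ) * Complex.I / (n : ℂ))))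
    he₁ hminus
  obtain ⟨K₂, hK₂0, hK₂⟩ := mik_log_bound n p hn nk hnk x
    (fun i => Complex.exp ((((n : ℂ) - (nk i : ℂ)) * (Real.pi : ℂ) * Complex.I / (n : ℂ))))
    he₂ hplus
  set α : ℝ := (1 - (n:ℝ)) / n with hαdef
  set β : ℝ := -(1 + (n:ℝ)) / n with hβdef
  have hα1 : -1 < α := by
    rw [hαdef, lt_div_iff₀ hn0]; ring_nf; linarith
  have hαne : α ≠ 0 := by
    rw [hαdef]; intro h
    have := div_eq_zero_iff.mp h
    rcases this with h' | h' <;> linarith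
  have hβne : β ≠ 0 := by
    rw [hβdef]; intro h
    have := div_eq_zero_iff.mp h
    rcases this with h' | h' <;> linarith
  have hβα : β + (2:ℝ)/(n:ℝ) = α := by
    rw [hβdef, hαdef, ← add_div]; congr 1; ring
  set C : ℝ := K₁ + K₂ with hCdef
  have hC : 0 ≤ C := by positivity
  rw [intervalIntegrable_iff_integrableOn_Ioc_of_le (by norm_num : (0:ℝ) ≤ 1)]
  have hg : IntegrableOn (fun t : ℝ => C * (t ^ α * (1 - t) ^ α)) (Ioc 0 1) volume := by
    rw [← intervalIntegrable_iff_integrableOn_Ioc_of_le (by norm_num : (0:ℝ) ≤ 1)]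
    exact (mik_beta_integrable hα1).const_mul C
  refine MeasureTheory.Integrable.mono hg ?_ ?_
  -- measurability
  · have hrw : volume.restrict (Ioc (0:ℝ) 1) = volume.restrict (Ioo (0:ℝ) 1) :=
      (MeasureTheory.Measure.restrict_congr_set Ioo_ae_eq_Ioc).symm
    rw [hrw]
    apply AEStronglyMeasurable.mul
    · refine ContinuousOn.aestronglyMeasurable ?_ measurableSet_Ioo
      intro t ht
      have h1 : ContinuousAt (fun t : ℝ => ((t ^ α : ℝ) : ℂ)) t :=
        Complex.continuous_ofReal.continuousAt.comp'
          (Real.continuousAt_rpow_const t α (Or.inl (ne_of_gt ht.1)))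
      have h2 : ContinuousAt (fun t : ℝ => (((1 - t) ^ β : ℝ) : ℂ)) t := by
        have d1 : ContinuousAt (fun t : ℝ => 1 - t) t :=
          (continuous_const.sub continuous_id).continuousAt
        have d12 : ContinuousAt (fun t : ℝ => (1 - t) ^ β) t :=
          d1.rpow_const (Or.inl (by intro h; nlinarith [ht.2]))
        exact Complex.continuous_ofReal.continuousAt.comp' d12
      exact (h1.mul h2).continuousWithinAt
    · have hwc₁ := mik_cont n p hn nk hnk x
        (fun i => Complex.exp (-(((n : ℂ) - (nk i : ℂ)) * (Real.pi : ℂ) * Complex.I / (n : ℂ))))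
      have hwc₂ := mik_cont n p hn nk hnk x
        (fun i => Complex.exp ((((n : ℂ) - (nk i : ℂ)) * (Real.pi : ℂ) * Complex.I / (n : ℂ))))
      exact ((measurable_const.mul (Complex.measurable_log.comp hwc₁.measurable)).sub
        (measurable_const.mul (Complex.measurable_log.comp hwc₂.measurable))).aestronglyMeasurable
  -- domination
  · rw [ae_restrict_iff' measurableSet_Ioc]
    refine Filter.Eventually.of_forall fun t ht => ?_
    have hI : t ∈ Icc (0:ℝ) 1 := ⟨ht.1.le, ht.2⟩
    have h1t : (0:ℝ) ≤ 1 - t := by linarith [ht.2]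
    have hfle : ‖((t ^ α : ℝ) : ℂ) * (((1 - t) ^ β : ℝ) : ℂ) *
        (Complex.exp ((Real.pi : ℂ) * Complex.I / (n : ℂ)) *
            Complex.log (1 + ∑ i, x i * ((t ^ ((nk i : ℝ) / (n : ℝ)) : ℝ) : ℂ) *
              (((1 - t) ^ (((n : ℝ) - (nk i : ℝ)) / (n : ℝ)) : ℝ) : ℂ) *
              Complex.exp (-(((n : ℂ) - (nk i : ℂ)) * (Real.pi : ℂ) * Complex.I / (n : ℂ)))) -
          Complex.exp (-((Real.pi : ℂ) * Complex.I / (n : ℂ))) *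
            Complex.log (1 + ∑ i, x i * ((t ^ ((nk i : ℝ) / (n : ℝ)) : ℝ) : ℂ) *
              (((1 - t) ^ (((n : ℝ) - (nk i : ℝ)) / (n : ℝ)) : ℝ) : ℂ) *
              Complex.exp ((((n : ℂ) - (nk i : ℂ)) * (Real.pi : ℂ) * Complex.I / (n : ℂ)))))‖
        ≤ C * (t ^ α * (1 - t) ^ α) := by
      rw [norm_mul, norm_mul, Complex.norm_real, Complex.norm_real, Real.norm_eq_abs,
        Real.norm_eq_abs, abs_of_nonneg (Real.rpow_nonneg ht.1.le _),
        abs_of_nonneg (Real.rpow_nonneg h1t _)]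
      have hbr : ‖Complex.exp ((Real.pi : ℂ) * Complex.I / (n : ℂ)) *
            Complex.log (1 + ∑ i, x i * ((t ^ ((nk i : ℝ) / (n : ℝ)) : ℝ) : ℂ) *
              (((1 - t) ^ (((n : ℝ) - (nk i : ℝ)) / (n : ℝ)) : ℝ) : ℂ) *
              Complex.exp (-(((n : ℂ) - (nk i : ℂ)) * (Real.pi : ℂ) * Complex.I / (n : ℂ)))) -
          Complex.exp (-((Real.pi : ℂ) * Complex.I / (n : ℂ))) *
            Complex.log (1 + ∑ i, x i * ((t ^ ((nk i : ℝ) / (n : ℝ)) : ℝ) : ℂ) *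
              (((1 - t) ^ (((n : ℝ) - (nk i : ℝ)) / (n : ℝ)) : ℝ) : ℂ) *
              Complex.exp ((((n : ℂ) - (nk i : ℂ)) * (Real.pi : ℂ) * Complex.I / (n : ℂ))))‖
          ≤ C * (1 - t) ^ ((2:ℝ)/(n:ℝ)) := by
        refine (norm_sub_le _ _).trans ?_
        rw [norm_mul, norm_mul, hepi, hepi', one_mul, one_mul, hCdef, add_mul]
        exact add_le_add (hK₁ t hI) (hK₂ t hI)
      refine le_trans (mul_le_mul_of_nonneg_left hbr
        (mul_nonneg (Real.rpow_nonneg ht.1.le _) (Real.rpow_nonneg h1t _))) (le_of_eq ?_)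
      rcases eq_or_lt_of_le h1t with h0 | h0
      · rw [← h0, Real.zero_rpow hβne, Real.zero_rpow hαne]; ring
      · calc t ^ α * (1 - t) ^ β * (C * (1 - t) ^ ((2:ℝ)/(n:ℝ)))
            = C * (t ^ α * ((1 - t) ^ β * (1 - t) ^ ((2:ℝ)/(n:ℝ)))) := by ring
          _ = C * (t ^ α * (1 - t) ^ (β + (2:ℝ)/(n:ℝ))) := by
            rw [← Real.rpow_add h0]
          _ = C * (t ^ α * (1 - t) ^ α) := by rw [hβα]
    refine hfle.trans ?_
    rw [Real.norm_eq_abs]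
    exact le_abs_self _
end

section
/- (Integrability of the modified integrand for the trinomial equation.) Let n ≥ 2 be a natural number and let x ∈ ℂ be such that for every t ∈ [0,1], 1 + x·t^{(n−1)/n}·(1−t)^{1/n}·e^{−πi/n} ≠ 0 and 1 + x·t^{(n−1)/n}·(1−t)^{1/n}·e^{πi/n} ≠ 0. Then the complex-valued function t ↦ t^{1/(2n)−1} · (1−t)^{−1/(2n)−1} · [ e^{πi/(2n)}·log(1 + x·t^{(n−1)/n}·(1−t)^{1/n}·e^{−πi/n}) − e^{−πi/(2n)}·log(1 + x·t^{(n−1)/n}·(1−t)^{1/n}·e^{πi/n}) ] is interval integrable on [0,1] with respect to Lebesgue measure. -/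
open MeasureTheory Set

private lemma beta_integrable' {p : ℝ} (hp : 0 < p) :
    IntervalIntegrable (fun t : ℝ => t ^ (p - 1) * (1 - t) ^ (p - 1)) volume 0 1 := by
  have hB := Complex.betaIntegral_convergent (u := (p : ℂ)) (v := (p : ℂ))
    (by simpa using hp) (by simpa using hp)
  refine hB.mono_fun ?_ ?_
  · apply Measurable.aestronglyMeasurable
    fun_prop
  · rw [Set.uIoc_of_le (zero_le_one' ℝ)]
    have h1 : ∀ᵐ t ∂(volume.restrict (Set.Ioc (0:ℝ) 1)), t ∈ Set.Ioc (0:ℝ) 1 :=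
      ae_restrict_mem measurableSet_Ioc
    have h2 : ∀ᵐ t ∂(volume.restrict (Set.Ioc (0:ℝ) 1)), t ≠ 1 :=
      ((ae_iff.mpr (by simp : volume {t : ℝ | ¬ t ≠ 1} = 0)).filter_mono
        (ae_mono Measure.restrict_le_self))
    filter_upwards [h1, h2] with t ht hne
    have ht0 : 0 < t := ht.1
    have ht1 : 0 < 1 - t := by
      rcases lt_or_eq_of_le ht.2 with h | h
      · linarith
      · exact absurd h hne
    rw [Real.norm_eq_abs, norm_mul,
      Complex.norm_cpow_eq_rpow_re_of_pos ht0,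
      show (1 - (t:ℂ)) = (((1 - t : ℝ)) : ℂ) by push_cast; ring,
      Complex.norm_cpow_eq_rpow_re_of_pos ht1]
    have hre : ((p:ℂ) - 1).re = p - 1 := by simp
    rw [hre, abs_mul, abs_of_nonneg (Real.rpow_nonneg ht0.le _),
      abs_of_nonneg (Real.rpow_nonneg ht1.le _)]

private lemma norm_log_le' {δ R : ℝ} (hδ : 0 < δ) {w : ℂ} (h1 : δ ≤ ‖w‖)
    (h2 : ‖w‖ ≤ R) :
    ‖Complex.log w‖ ≤ |Real.log δ| + |Real.log R| + Real.pi := by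
  have habs : ‖Complex.log w‖ ≤ |(Complex.log w).re| + |(Complex.log w).im| :=
    Complex.norm_le_abs_re_add_abs_im _
  have hre : (Complex.log w).re = Real.log (‖w‖) := Complex.log_re w
  have him : |(Complex.log w).im| ≤ Real.pi := by
    rw [Complex.log_im]; exact Complex.abs_arg_le_pi w
  have hlogle : Real.log (‖w‖) ≤ Real.log R := Real.log_le_log (hδ.trans_le h1) h2
  have hlogge : Real.log δ ≤ Real.log (‖w‖) := Real.log_le_log hδ h1
  have hmid : |Real.log (‖w‖)| ≤ |Real.log δ| + |Real.log R| := by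
    rw [abs_le]
    constructor
    · have h3 := neg_abs_le (Real.log δ)
      have h4 := abs_nonneg (Real.log R)
      linarith
    · have h3 := le_abs_self (Real.log R)
      have h4 := abs_nonneg (Real.log δ)
      linarith
  rw [hre] at habs
  linarith

set_option maxHeartbeats 1000000 in
/-- Integrability of the modified integrand for the trinomial equation
`zⁿ + x·z^{n-1} - 1 = 0`: if `x` lies outside the exceptional sets `Σ′₋ ∪ Σ′₊`, then the
modified (μ = 1/2) integrand is interval integrable on `[0,1]`. -/
theorem modified_integrand_integrable (n : ℕ) (hn : 2 ≤ n) (x : ℂ)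
    (hminus : ∀ t ∈ Set.Icc (0 : ℝ) 1,
      1 + x * ((t ^ (((n : ℝ) - 1) / (n : ℝ)) : ℝ) : ℂ) *
        (((1 - t) ^ ((1 : ℝ) / (n : ℝ)) : ℝ) : ℂ) *
        Complex.exp (-((Real.pi : ℂ) * Complex.I / (n : ℂ))) ≠ 0)
    (hplus : ∀ t ∈ Set.Icc (0 : ℝ) 1,
      1 + x * ((t ^ (((n : ℝ) - 1) / (n : ℝ)) : ℝ) : ℂ) *
        (((1 - t) ^ ((1 : ℝ) / (n : ℝ)) : ℝ) : ℂ) *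
        Complex.exp ((Real.pi : ℂ) * Complex.I / (n : ℂ)) ≠ 0) :
    IntervalIntegrable (fun t : ℝ =>
      ((t ^ (1 / (2 * (n : ℝ)) - 1) : ℝ) : ℂ) *
        (((1 - t) ^ (-(1 / (2 * (n : ℝ))) - 1) : ℝ) : ℂ) *
        (Complex.exp ((Real.pi : ℂ) * Complex.I / (2 * (n : ℂ))) *
            Complex.log (1 + x * ((t ^ (((n : ℝ) - 1) / (n : ℝ)) : ℝ) : ℂ) *
              (((1 - t) ^ ((1 : ℝ) / (n : ℝ)) : ℝ) : ℂ) *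
              Complex.exp (-((Real.pi : ℂ) * Complex.I / (n : ℂ)))) -
          Complex.exp (-((Real.pi : ℂ) * Complex.I / (2 * (n : ℂ)))) *
            Complex.log (1 + x * ((t ^ (((n : ℝ) - 1) / (n : ℝ)) : ℝ) : ℂ) *
              (((1 - t) ^ ((1 : ℝ) / (n : ℝ)) : ℝ) : ℂ) *
              Complex.exp ((Real.pi : ℂ) * Complex.I / (n : ℂ)))))
      MeasureTheory.volume 0 1 := by
  have h2R : (2:ℝ) ≤ (n:ℝ) := by exact_mod_cast hn
  have hN0 : (0:ℝ) < (n:ℝ) := by linarith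
  set p : ℝ := 1 / (2 * (n:ℝ)) with hp_def
  have hp : 0 < p := by positivity
  set q1 : ℝ := ((n:ℝ) - 1) / (n:ℝ) with hq1_def
  set q2 : ℝ := (1:ℝ) / (n:ℝ) with hq2_def
  have hq1nn : 0 ≤ q1 := div_nonneg (by linarith) hN0.le
  have hq2nn : 0 ≤ q2 := by positivity
  have hq2p : q2 = 2 * p := by rw [hq2_def, hp_def]; field_simp
  set e₁ : ℂ := Complex.exp (-((Real.pi : ℂ) * Complex.I / (n : ℂ))) with he₁
  set e₂ : ℂ := Complex.exp ((Real.pi : ℂ) * Complex.I / (n : ℂ)) with he₂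
  set E₁ : ℂ := Complex.exp ((Real.pi : ℂ) * Complex.I / (2 * (n : ℂ))) with hE₁
  set E₂ : ℂ := Complex.exp (-((Real.pi : ℂ) * Complex.I / (2 * (n : ℂ)))) with hE₂
  have he₁abs : ‖e₁‖ = 1 := by
    rw [he₁, show -((Real.pi : ℂ) * Complex.I / (n : ℂ))
        = ((-(Real.pi/(n:ℝ)) : ℝ) : ℂ) * Complex.I by push_cast; ring]
    exact Complex.norm_exp_ofReal_mul_I _
  have he₂abs : ‖e₂‖ = 1 := by
    rw [he₂, show ((Real.pi : ℂ) * Complex.I / (n : ℂ))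
        = (((Real.pi/(n:ℝ)) : ℝ) : ℂ) * Complex.I by push_cast; ring]
    exact Complex.norm_exp_ofReal_mul_I _
  have hE₁abs : ‖E₁‖ = 1 := by
    rw [hE₁, show ((Real.pi : ℂ) * Complex.I / (2 * (n : ℂ)))
        = (((Real.pi/(2*(n:ℝ))) : ℝ) : ℂ) * Complex.I by push_cast; ring]
    exact Complex.norm_exp_ofReal_mul_I _
  have hE₂abs : ‖E₂‖ = 1 := by
    rw [hE₂, show -((Real.pi : ℂ) * Complex.I / (2 * (n : ℂ)))
        = ((-(Real.pi/(2*(n:ℝ))) : ℝ) : ℂ) * Complex.I by push_cast; ring]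
    exact Complex.norm_exp_ofReal_mul_I _
  set w₁ : ℝ → ℂ := fun t => 1 + x * ((t ^ q1 : ℝ) : ℂ) * (((1 - t) ^ q2 : ℝ) : ℂ) * e₁ with hw₁
  set w₂ : ℝ → ℂ := fun t => 1 + x * ((t ^ q1 : ℝ) : ℂ) * (((1 - t) ^ q2 : ℝ) : ℂ) * e₂ with hw₂
  have hcont : ∀ e : ℂ, Continuous
      (fun t : ℝ => 1 + x * ((t ^ q1 : ℝ) : ℂ) * (((1 - t) ^ q2 : ℝ) : ℂ) * e) := fun e =>
    continuous_const.add
      (((continuous_const.mul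
        (Complex.continuous_ofReal.comp (Real.continuous_rpow_const hq1nn))).mul
        (Complex.continuous_ofReal.comp
          ((Real.continuous_rpow_const hq2nn).comp (continuous_const.sub continuous_id)))).mul
        continuous_const)
  have hcont1 : Continuous w₁ := by rw [hw₁]; exact hcont e₁
  have hcont2 : Continuous w₂ := by rw [hw₂]; exact hcont e₂
  -- the inner perturbation term and its size
  have hu : ∀ t ∈ Icc (0:ℝ) 1, ∀ e : ℂ, ‖e‖ = 1 →
      ‖x * ((t ^ q1 : ℝ) : ℂ) * (((1 - t) ^ q2 : ℝ) : ℂ) * e‖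
        ≤ ‖x‖ * ((1 - t) ^ q2) := by
    intro t ht e he
    have h1t : (0:ℝ) ≤ 1 - t := by linarith [ht.2]
    rw [norm_mul, norm_mul, norm_mul, he, mul_one, Complex.norm_real, Complex.norm_real,
      Real.norm_eq_abs, Real.norm_eq_abs,
      abs_of_nonneg (Real.rpow_nonneg ht.1 _), abs_of_nonneg (Real.rpow_nonneg h1t _)]
    have hle1 : t ^ q1 ≤ 1 := Real.rpow_le_one ht.1 ht.2 hq1nn
    have h2 : (0:ℝ) ≤ (1 - t) ^ q2 := Real.rpow_nonneg h1t _
    have h4 : ‖x‖ * t ^ q1 ≤ ‖x‖ :=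
      mul_le_of_le_one_right (norm_nonneg x) hle1
    exact mul_le_mul_of_nonneg_right h4 h2
  have hb_le_one : ∀ t ∈ Icc (0:ℝ) 1, (1 - t) ^ q2 ≤ 1 := fun t ht =>
    Real.rpow_le_one (by linarith [ht.2]) (by linarith [ht.1]) hq2nn
  -- upper bound for |w|
  have hupper : ∀ t ∈ Icc (0:ℝ) 1, ∀ e : ℂ, ‖e‖ = 1 →
      ‖1 + x * ((t ^ q1 : ℝ) : ℂ) * (((1 - t) ^ q2 : ℝ) : ℂ) * e‖
        ≤ 1 + ‖x‖ := by
    intro t ht e he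
    calc ‖1 + x * ((t ^ q1 : ℝ) : ℂ) * (((1 - t) ^ q2 : ℝ) : ℂ) * e‖
        ≤ ‖1‖ + ‖x * ((t ^ q1 : ℝ) : ℂ) * (((1 - t) ^ q2 : ℝ) : ℂ) * e‖ :=
          norm_add_le _ _
      _ ≤ 1 + ‖x‖ * ((1 - t) ^ q2) := by
          rw [norm_one]; exact add_le_add_right (hu t ht e he) 1
      _ ≤ 1 + ‖x‖ := by
          have h5 : ‖x‖ * ((1 - t) ^ q2) ≤ ‖x‖ :=
            mul_le_of_le_one_right (norm_nonneg x) (hb_le_one t ht)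
          linarith
  -- lower bounds via compactness
  obtain ⟨t₁, ht₁mem, ht₁min⟩ := isCompact_Icc.exists_isMinOn
      (Set.nonempty_Icc.mpr zero_le_one) ((continuous_norm.comp hcont1).continuousOn)
  obtain ⟨t₂, ht₂mem, ht₂min⟩ := isCompact_Icc.exists_isMinOn
      (Set.nonempty_Icc.mpr zero_le_one) ((continuous_norm.comp hcont2).continuousOn)
  set δ : ℝ := min (‖w₁ t₁‖) (‖w₂ t₂‖) with hδ_def
  have hδ₁ : 0 < ‖w₁ t₁‖ := by
    rw [norm_pos_iff, hw₁]; exact hminus t₁ ht₁mem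
  have hδ₂ : 0 < ‖w₂ t₂‖ := by
    rw [norm_pos_iff, hw₂]; exact hplus t₂ ht₂mem
  have hδpos : 0 < δ := lt_min hδ₁ hδ₂
  have hlow1 : ∀ t ∈ Icc (0:ℝ) 1, δ ≤ ‖w₁ t‖ := fun t ht =>
    (min_le_left _ _).trans (ht₁min ht)
  have hlow2 : ∀ t ∈ Icc (0:ℝ) 1, δ ≤ ‖w₂ t‖ := fun t ht =>
    (min_le_right _ _).trans (ht₂min ht)
  -- constant C₀ bounding the logs
  set C₀ : ℝ := |Real.log δ| + |Real.log (1 + ‖x‖)| + Real.pi with hC₀_def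
  have hC₀nn : 0 ≤ C₀ := by
    have := Real.pi_pos
    have := abs_nonneg (Real.log δ)
    have := abs_nonneg (Real.log (1 + ‖x‖))
    linarith
  have hlog1 : ∀ t ∈ Icc (0:ℝ) 1, ‖Complex.log (w₁ t)‖ ≤ C₀ := fun t ht =>
    norm_log_le' hδpos (hlow1 t ht) (hupper t ht e₁ he₁abs)
  have hlog2 : ∀ t ∈ Icc (0:ℝ) 1, ‖Complex.log (w₂ t)‖ ≤ C₀ := fun t ht =>
    norm_log_le' hδpos (hlow2 t ht) (hupper t ht e₂ he₂abs)
  -- the key bracket bound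
  set c : ℝ := 1 / (2 * (1 + ‖x‖)) with hc_def
  have hcpos : 0 < c := by positivity
  set C : ℝ := 3 * ‖x‖ + 2 * C₀ / c with hC_def
  have hCc : 0 ≤ 2 * C₀ / c := div_nonneg (by linarith) hcpos.le
  have hCnn : 0 ≤ C := by
    have h := norm_nonneg x
    rw [hC_def]; linarith
  have hbr : ∀ t ∈ Icc (0:ℝ) 1,
      ‖E₁ * Complex.log (w₁ t) - E₂ * Complex.log (w₂ t)‖ ≤ C * (1 - t) ^ q2 := by
    intro t ht
    have h1t : (0:ℝ) ≤ 1 - t := by linarith [ht.2]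
    have hbnn : (0:ℝ) ≤ (1 - t) ^ q2 := Real.rpow_nonneg h1t _
    have hsum : ‖E₁ * Complex.log (w₁ t) - E₂ * Complex.log (w₂ t)‖
        ≤ ‖Complex.log (w₁ t)‖ + ‖Complex.log (w₂ t)‖ := by
      calc ‖E₁ * Complex.log (w₁ t) - E₂ * Complex.log (w₂ t)‖
          ≤ ‖E₁ * Complex.log (w₁ t)‖ + ‖E₂ * Complex.log (w₂ t)‖ := norm_sub_le _ _
        _ = ‖Complex.log (w₁ t)‖ + ‖Complex.log (w₂ t)‖ := by
            rw [norm_mul, norm_mul, hE₁abs, hE₂abs, one_mul, one_mul]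
    by_cases hcase : (1 - t) ^ q2 ≤ c
    · -- near t = 1 : use log(1+z) ≤ (3/2)|z|
      have hxc : ‖x‖ * c ≤ 1 / 2 := by
        rw [hc_def, mul_one_div, div_le_div_iff₀ (by positivity) (by norm_num)]
        have h := norm_nonneg x
        linarith
      have hsmall : ∀ e : ℂ, ‖e‖ = 1 →
          ‖x * ((t ^ q1 : ℝ) : ℂ) * (((1 - t) ^ q2 : ℝ) : ℂ) * e‖ ≤ 1 / 2 := by
        intro e he
        calc ‖x * ((t ^ q1 : ℝ) : ℂ) * (((1 - t) ^ q2 : ℝ) : ℂ) * e‖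
            ≤ ‖x‖ * ((1 - t) ^ q2) := hu t ht e he
          _ ≤ ‖x‖ * c := by
              exact mul_le_mul_of_nonneg_left hcase (norm_nonneg x)
          _ ≤ 1 / 2 := hxc
      have hL1 : ‖Complex.log (w₁ t)‖ ≤ (3/2) * (‖x‖ * ((1 - t) ^ q2)) := by
        have h6 := Complex.norm_log_one_add_half_le_self (hsmall e₁ he₁abs)
        have h7 : ‖x * ((t ^ q1 : ℝ) : ℂ) * (((1 - t) ^ q2 : ℝ) : ℂ) * e₁‖
            ≤ ‖x‖ * ((1 - t) ^ q2) := by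
          exact hu t ht e₁ he₁abs
        calc ‖Complex.log (w₁ t)‖
            = ‖Complex.log (1 + x * ((t ^ q1 : ℝ) : ℂ) * (((1 - t) ^ q2 : ℝ) : ℂ) * e₁)‖ := rfl
          _ ≤ (3/2) * ‖x * ((t ^ q1 : ℝ) : ℂ) * (((1 - t) ^ q2 : ℝ) : ℂ) * e₁‖ := h6
          _ ≤ (3/2) * (‖x‖ * ((1 - t) ^ q2)) := by linarith
      have hL2 : ‖Complex.log (w₂ t)‖ ≤ (3/2) * (‖x‖ * ((1 - t) ^ q2)) := by
        have h6 := Complex.norm_log_one_add_half_le_self (hsmall e₂ he₂abs)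
        have h7 : ‖x * ((t ^ q1 : ℝ) : ℂ) * (((1 - t) ^ q2 : ℝ) : ℂ) * e₂‖
            ≤ ‖x‖ * ((1 - t) ^ q2) := by
          exact hu t ht e₂ he₂abs
        calc ‖Complex.log (w₂ t)‖
            = ‖Complex.log (1 + x * ((t ^ q1 : ℝ) : ℂ) * (((1 - t) ^ q2 : ℝ) : ℂ) * e₂)‖ := rfl
          _ ≤ (3/2) * ‖x * ((t ^ q1 : ℝ) : ℂ) * (((1 - t) ^ q2 : ℝ) : ℂ) * e₂‖ := h6
          _ ≤ (3/2) * (‖x‖ * ((1 - t) ^ q2)) := by linarith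
      calc ‖E₁ * Complex.log (w₁ t) - E₂ * Complex.log (w₂ t)‖
          ≤ ‖Complex.log (w₁ t)‖ + ‖Complex.log (w₂ t)‖ := hsum
        _ ≤ 3 * (‖x‖ * ((1 - t) ^ q2)) := by linarith
        _ ≤ C * (1 - t) ^ q2 := by
            rw [hC_def, add_mul]
            have h8 := mul_nonneg hCc hbnn
            have h9 : 3 * (‖x‖ * ((1 - t) ^ q2))
                = 3 * ‖x‖ * ((1 - t) ^ q2) := by ring
            linarith
    · push_neg at hcase
      calc ‖E₁ * Complex.log (w₁ t) - E₂ * Complex.log (w₂ t)‖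
          ≤ ‖Complex.log (w₁ t)‖ + ‖Complex.log (w₂ t)‖ := hsum
        _ ≤ 2 * C₀ := by linarith [hlog1 t ht, hlog2 t ht]
        _ = (2 * C₀ / c) * c := by field_simp
        _ ≤ (2 * C₀ / c) * ((1 - t) ^ q2) :=
            mul_le_mul_of_nonneg_left hcase.le hCc
        _ ≤ C * (1 - t) ^ q2 := by
            rw [hC_def, add_mul]
            have h8 := mul_nonneg (mul_nonneg (by norm_num : (0:ℝ) ≤ 3)
              (norm_nonneg x)) hbnn
            linarith
  -- now conclude by comparison with the Beta integrand
  refine IntervalIntegrable.mono_fun ((beta_integrable' hp).const_mul C) ?_ ?_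
  · apply Measurable.aestronglyMeasurable
    apply Measurable.mul
    · apply Measurable.mul <;> · apply Complex.measurable_ofReal.comp; fun_prop
    · exact ((measurable_const.mul (Complex.measurable_log.comp hcont1.measurable)).sub
        (measurable_const.mul (Complex.measurable_log.comp hcont2.measurable)))
  · rw [Set.uIoc_of_le (zero_le_one' ℝ)]
    have h1 : ∀ᵐ t ∂(volume.restrict (Set.Ioc (0:ℝ) 1)), t ∈ Set.Ioc (0:ℝ) 1 :=
      ae_restrict_mem measurableSet_Ioc
    have h2 : ∀ᵐ t ∂(volume.restrict (Set.Ioc (0:ℝ) 1)), t ≠ 1 :=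
      ((ae_iff.mpr (by simp : volume {t : ℝ | ¬ t ≠ 1} = 0)).filter_mono
        (ae_mono Measure.restrict_le_self))
    filter_upwards [h1, h2] with t ht hne
    have ht0 : 0 < t := ht.1
    have ht1 : 0 < 1 - t := by
      rcases lt_or_eq_of_le ht.2 with h | h
      · linarith
      · exact absurd h hne
    have htmem : t ∈ Icc (0:ℝ) 1 := ⟨ht0.le, ht.2⟩
    rw [norm_mul, norm_mul, Complex.norm_real, Complex.norm_real, Real.norm_eq_abs,
      Real.norm_eq_abs, abs_of_nonneg (Real.rpow_nonneg ht0.le _),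
      abs_of_nonneg (Real.rpow_nonneg ht1.le _), Real.norm_eq_abs,
      abs_of_nonneg (mul_nonneg hCnn (mul_nonneg (Real.rpow_nonneg ht0.le _)
        (Real.rpow_nonneg ht1.le _)))]
    calc t ^ (p - 1) * (1 - t) ^ (-p - 1)
          * ‖E₁ * Complex.log (w₁ t) - E₂ * Complex.log (w₂ t)‖
        ≤ t ^ (p - 1) * (1 - t) ^ (-p - 1) * (C * (1 - t) ^ q2) := by
          exact mul_le_mul_of_nonneg_left (hbr t htmem) (by positivity)
      _ = C * (t ^ (p - 1) * ((1 - t) ^ (-p - 1) * (1 - t) ^ q2)) := by ring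
      _ = C * (t ^ (p - 1) * (1 - t) ^ (p - 1)) := by
          rw [← Real.rpow_add ht1, show -p - 1 + q2 = p - 1 by rw [hq2p]; ring]
end

section
/- (Holomorphy of the integral representation.) Let n ≥ 2 be a natural number, and let U ⊆ ℂ be the set of all x such that for every t ∈ [0,1], 1 + x·t^{(n−1)/n}·(1−t)^{1/n}·e^{−πi/n} ≠ 0 and 1 + x·t^{(n−1)/n}·(1−t)^{1/n}·e^{πi/n} ≠ 0. Then the function w : ℂ → ℂ defined by w(x) = 1 + (1/(4πi·n)) · ∫₀¹ t^{1/(2n)−1} · (1−t)^{−1/(2n)−1} · [ e^{πi/(2n)}·log(1 + x·t^{(n−1)/n}·(1−t)^{1/n}·e^{−πi/n}) − e^{−πi/(2n)}·log(1 + x·t^{(n−1)/n}·(1−t)^{1/n}·e^{πi/n}) ] dt is complex differentiable at every point of U (i.e. DifferentiableOn ℂ on U). -/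
open MeasureTheory Set

private lemma helper_slit {z₀ z : ℂ} {δ : ℝ} (hδ : 0 < δ)
    (h : δ ≤ max z₀.re |z₀.im|) (hz : ‖z - z₀‖ < δ / 2) :
    z ∈ Complex.slitPlane ∧ δ / 2 ≤ ‖z‖ := by
  have hre : |(z - z₀).re| ≤ ‖z - z₀‖ := by
    exact Complex.abs_re_le_norm _
  have him : |(z - z₀).im| ≤ ‖z - z₀‖ := by
    exact Complex.abs_im_le_norm _
  have ere : (z - z₀).re = z.re - z₀.re := Complex.sub_re _ _
  have eim : (z - z₀).im = z.im - z₀.im := Complex.sub_im _ _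
  have hre' := neg_abs_le ((z - z₀).re)
  have him' := neg_abs_le ((z - z₀).im)
  have hzre : |z.re| ≤ ‖z‖ := by exact Complex.abs_re_le_norm _
  have hzim : |z.im| ≤ ‖z‖ := by exact Complex.abs_im_le_norm _
  rcases le_max_iff.mp h with h1 | h1
  · have h2 : δ / 2 < z.re := by linarith
    refine ⟨Complex.mem_slitPlane_iff.mpr (Or.inl (by linarith)), ?_⟩
    have := le_abs_self z.re
    linarith
  · have key : |z₀.im| - |z.im| ≤ |(z - z₀).im| := by
      rw [eim, abs_sub_comm]
      exact abs_sub_abs_le_abs_sub _ _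
    have h2 : δ / 2 < |z.im| := by linarith
    refine ⟨Complex.mem_slitPlane_iff.mpr (Or.inr (by intro h0; rw [h0] at h2; simp at h2; linarith)), by linarith⟩


private lemma key_aux {N : ℝ} (hN : 1 < N) (x₀ c : ℂ) (hc : ‖c‖ = 1)
    (h0 : ∀ t ∈ Icc (0:ℝ) 1,
      1 + x₀ * ((t ^ ((N - 1) / N) : ℝ) : ℂ) * (((1 - t) ^ ((1:ℝ) / N) : ℝ) : ℂ) * c ≠ 0) :
    ∃ δ > 0, ∀ x : ℂ, ‖x - x₀‖ < δ / 2 → ∀ t ∈ Icc (0:ℝ) 1,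
      (1 + x * ((t ^ ((N - 1) / N) : ℝ) : ℂ) * (((1 - t) ^ ((1:ℝ) / N) : ℝ) : ℂ) * c
        ∈ Complex.slitPlane) ∧
      δ / 2 ≤ ‖1 + x * ((t ^ ((N - 1) / N) : ℝ) : ℂ) * (((1 - t) ^ ((1:ℝ) / N) : ℝ) : ℂ) * c‖ := by
  have hN0 : 0 < N := by linarith
  have he1 : 0 < (N - 1) / N := div_pos (by linarith) (by linarith)
  have he2 : 0 ≤ (1:ℝ) / N := by positivity
  set r : ℝ → ℝ := fun t => t ^ ((N - 1) / N) * (1 - t) ^ ((1:ℝ) / N) with hr_def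
  have hr_cont : Continuous r := by
    exact (Real.continuous_rpow_const he1.le).mul
      ((Real.continuous_rpow_const he2).comp (continuous_const.sub continuous_id))
  have hr0 : r 0 = 0 := by
    simp [hr_def, Real.zero_rpow (ne_of_gt he1)]
  have hr_nonneg : ∀ t ∈ Icc (0:ℝ) 1, 0 ≤ r t := by
    intro t ht
    exact mul_nonneg (Real.rpow_nonneg ht.1 _) (Real.rpow_nonneg (by linarith [ht.2]) _)
  have hr_le_one : ∀ t ∈ Icc (0:ℝ) 1, r t ≤ 1 := by
    intro t ht
    have h1 : t ^ ((N - 1) / N) ≤ 1 := Real.rpow_le_one ht.1 ht.2 he1.le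
    have h2 : (1 - t) ^ ((1:ℝ) / N) ≤ 1 :=
      Real.rpow_le_one (by linarith [ht.2]) (by linarith [ht.1]) he2
    exact mul_le_one₀ h1 (Real.rpow_nonneg (by linarith [ht.2]) _) h2
  have hform : ∀ (x : ℂ) (t : ℝ),
      1 + x * ((t ^ ((N - 1) / N) : ℝ) : ℂ) * (((1 - t) ^ ((1:ℝ) / N) : ℝ) : ℂ) * c
        = 1 + (r t : ℂ) * (x * c) := by
    intro x t
    simp only [hr_def]
    push_cast
    ring
  -- IVT: values at x₀ lie in the slit plane
  have hslit0 : ∀ t ∈ Icc (0:ℝ) 1, 1 + (r t : ℂ) * (x₀ * c) ∈ Complex.slitPlane := by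
    intro t ht
    by_contra hcon
    rw [Complex.mem_slitPlane_iff] at hcon
    push_neg at hcon
    obtain ⟨hre, him⟩ := hcon
    set w : ℂ := x₀ * c with hw
    have hre' : 1 + r t * w.re ≤ 0 := by
      simpa [Complex.add_re, Complex.re_ofReal_mul] using hre
    have him' : r t * w.im = 0 := by
      simpa [Complex.add_im, Complex.im_ofReal_mul] using him
    have hrt : 0 < r t := by
      rcases lt_or_eq_of_le (hr_nonneg t ht) with h | h
      · exact h
      · exfalso; rw [← h] at hre'; simp at hre'; linarith
    have hwim : w.im = 0 := by
      rcases mul_eq_zero.mp him' with h | h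
      · exact absurd h (ne_of_gt hrt)
      · exact h
    -- intermediate value theorem for g τ = 1 + r τ * w.re on [0, t]
    have hg_cont : ContinuousOn (fun τ : ℝ => 1 + r τ * w.re) (Icc 0 t) :=
      (continuous_const.add (hr_cont.mul continuous_const)).continuousOn
    have hmem : (0:ℝ) ∈ Icc (1 + r t * w.re) (1 + r 0 * w.re) := by
      rw [hr0]; exact ⟨hre', by norm_num⟩
    have := intermediate_value_Icc' ht.1 hg_cont hmem
    obtain ⟨τ, hτ, hgτ⟩ := this
    have hτ' : τ ∈ Icc (0:ℝ) 1 := ⟨hτ.1, hτ.2.trans ht.2⟩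
    apply h0 τ hτ'
    rw [hform]
    have hwre : w = ((w.re : ℝ) : ℂ) := by
      apply Complex.ext <;> simp [hwim]
    rw [← hw, hwre]
    rw [show ((r τ : ℝ) : ℂ) * ((w.re : ℝ) : ℂ) = (((r τ * w.re : ℝ)) : ℂ) by push_cast; ring]
    rw [show (1 : ℂ) + ((r τ * w.re : ℝ) : ℂ) = (((1 + r τ * w.re : ℝ)) : ℂ) by push_cast; ring]
    have hgτ' : 1 + r τ * w.re = 0 := hgτ
    rw [hgτ']
    simp
  -- compactness: uniform lower bound δ
  set φ : ℝ → ℝ := fun t =>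
    max (1 + (r t : ℂ) * (x₀ * c)).re |(1 + (r t : ℂ) * (x₀ * c)).im| with hφ_def
  have hφ_cont : Continuous φ := by
    have hc1 : Continuous fun t : ℝ => 1 + (r t : ℂ) * (x₀ * c) :=
      continuous_const.add ((Complex.continuous_ofReal.comp hr_cont).mul continuous_const)
    exact (Complex.continuous_re.comp hc1).max ((Complex.continuous_im.comp hc1).abs)
  obtain ⟨t₀, ht₀, hmin⟩ := isCompact_Icc.exists_isMinOn
    (nonempty_Icc.mpr zero_le_one) hφ_cont.continuousOn
  have hmin : ∀ t ∈ Icc (0:ℝ) 1, φ t₀ ≤ φ t := fun t ht => hmin ht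
  refine ⟨φ t₀, ?_, ?_⟩
  · have := hslit0 t₀ ht₀
    rw [Complex.mem_slitPlane_iff] at this
    rcases this with h | h
    · exact lt_max_iff.mpr (Or.inl h)
    · exact lt_max_iff.mpr (Or.inr (abs_pos.mpr h))
  · intro x hx t ht
    rw [hform x t]
    have hδt : φ t₀ ≤ max (1 + (r t : ℂ) * (x₀ * c)).re |(1 + (r t : ℂ) * (x₀ * c)).im| :=
      hmin t ht
    have hdist : ‖(1 + (r t : ℂ) * (x * c)) - (1 + (r t : ℂ) * (x₀ * c))‖ < φ t₀ / 2 := by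
      have he : (1 + (r t : ℂ) * (x * c)) - (1 + (r t : ℂ) * (x₀ * c))
          = (r t : ℂ) * ((x - x₀) * c) := by ring
      rw [he]
      have : ‖(r t : ℂ) * ((x - x₀) * c)‖ = r t * ‖x - x₀‖ := by
        rw [norm_mul, norm_mul, Complex.norm_real, hc,
          Real.norm_eq_abs, abs_of_nonneg (hr_nonneg t ht), mul_one]
      rw [this]
      calc r t * ‖x - x₀‖ ≤ 1 * ‖x - x₀‖ :=
            mul_le_mul_of_nonneg_right (hr_le_one t ht) (norm_nonneg _)
        _ < φ t₀ / 2 := by rw [one_mul]; exact hx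
    have hδpos : 0 < φ t₀ := by
      have := hslit0 t₀ ht₀
      rw [Complex.mem_slitPlane_iff] at this
      rcases this with h | h
      · exact lt_max_iff.mpr (Or.inl h)
      · exact lt_max_iff.mpr (Or.inr (abs_pos.mpr h))
    exact helper_slit hδpos hδt hdist


private lemma norm_clog_le {δ R : ℝ} (hδ : 0 < δ) (_hδ1 : δ ≤ 1) (u : ℂ)
    (h1 : δ ≤ ‖1 + u‖) (hR : ‖u‖ ≤ R) :
    ‖Complex.log (1 + u)‖ ≤ (2 * (|Real.log δ| + Real.log (1 + R) + Real.pi) + 2) * ‖u‖ := by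
  have hR0 : 0 ≤ R := le_trans (norm_nonneg u) hR
  have hlogR : 0 ≤ Real.log (1 + R) := Real.log_nonneg (by linarith)
  have habs : 0 ≤ |Real.log δ| := abs_nonneg _
  have hπ := Real.pi_pos
  rcases le_or_gt ‖u‖ (1/2 : ℝ) with hu | hu
  · have := Complex.norm_log_one_add_half_le_self hu
    nlinarith [norm_nonneg u]
  · -- large case: crude bound on ‖log (1+u)‖
    have hz : (0:ℝ) < ‖1 + u‖ := lt_of_lt_of_le hδ h1
    have hlog_le : ‖Complex.log (1 + u)‖
        ≤ |Real.log ‖1 + u‖| + Real.pi := by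
      rw [Complex.log]
      refine le_trans (norm_add_le _ _) ?_
      rw [Complex.norm_real, norm_mul, Complex.norm_I, mul_one, Complex.norm_real]
      gcongr
      rw [Real.norm_eq_abs]
      exact Complex.abs_arg_le_pi _
    have habs_eq : ‖1 + u‖ = ‖1 + u‖ := rfl
    have hub : ‖1 + u‖ ≤ 1 + R := le_trans (norm_add_le _ _) (by rw [norm_one]; linarith)
    have hlog_bound : |Real.log ‖1 + u‖| ≤ |Real.log δ| + Real.log (1 + R) := by
      rw [abs_le]
      constructor
      · have : Real.log δ ≤ Real.log ‖1 + u‖ := Real.log_le_log hδ h1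
        have : -|Real.log δ| ≤ Real.log δ := neg_abs_le _
        linarith [Real.log_le_log hδ h1]
      · have h2 : Real.log ‖1 + u‖ ≤ Real.log (1 + R) := Real.log_le_log hz hub
        linarith
    have hK : ‖Complex.log (1 + u)‖ ≤ |Real.log δ| + Real.log (1 + R) + Real.pi := by
      rw [habs_eq] at hlog_le
      linarith
    nlinarith [norm_nonneg (Complex.log (1 + u))]

private lemma integrable_rpow_rpow {a b : ℝ} (ha : -1 < a) (hb : -1 < b) :
    IntegrableOn (fun t : ℝ => t ^ a * (1 - t) ^ b) (Ioo 0 1) volume := by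
  have h := Complex.betaIntegral_convergent (u := (a:ℂ) + 1) (v := (b:ℂ) + 1)
    (by simp; linarith) (by simp; linarith)
  rw [intervalIntegrable_iff_integrableOn_Ioc_of_le zero_le_one] at h
  have h2 := (h.mono_set Ioo_subset_Ioc_self).norm
  refine h2.congr ((ae_restrict_iff' measurableSet_Ioo).mpr (ae_of_all _ ?_))
  intro t ht
  have ht1 : (0:ℝ) < t := ht.1
  have ht2 : (0:ℝ) < 1 - t := by linarith [ht.2]
  have e1 : ((a:ℂ) + 1 - 1) = (a:ℂ) := by ring
  have e2 : ((b:ℂ) + 1 - 1) = (b:ℂ) := by ring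
  show ‖(t:ℂ) ^ ((a:ℂ) + 1 - 1) * (1 - (t:ℂ)) ^ ((b:ℂ) + 1 - 1)‖ = t ^ a * (1 - t) ^ b
  rw [e1, e2, norm_mul]
  rw [show (1 - (t:ℂ)) = (((1 - t : ℝ)) : ℂ) by push_cast; ring]
  rw [
    Complex.norm_cpow_eq_rpow_re_of_pos ht1, Complex.norm_cpow_eq_rpow_re_of_pos ht2,
    Complex.ofReal_re, Complex.ofReal_re]


set_option maxHeartbeats 1000000


/-- Holomorphy of the integral representation: the function
`w(x) = 1 + (1/(4πin))·∫₀¹ t^{1/(2n)-1}(1-t)^{-1/(2n)-1}[e^{πi/(2n)}log(1+x t^{(n-1)/n}(1-t)^{1/n}e^{-πi/n})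
  - e^{-πi/(2n)}log(1+x t^{(n-1)/n}(1-t)^{1/n}e^{πi/n})]dt`
is complex differentiable on the complement `U` of the exceptional sets `Σ′₋ ∪ Σ′₊` of the
trinomial equation `zⁿ + x·z^{n-1} - 1 = 0`. -/
theorem integral_representation_holomorphic (n : ℕ) (hn : 2 ≤ n) :
    let U : Set ℂ := {x | ∀ t ∈ Set.Icc (0 : ℝ) 1,
      1 + x * ((t ^ (((n : ℝ) - 1) / (n : ℝ)) : ℝ) : ℂ) *
        (((1 - t) ^ ((1 : ℝ) / (n : ℝ)) : ℝ) : ℂ) *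
        Complex.exp (-((Real.pi : ℂ) * Complex.I / (n : ℂ))) ≠ 0 ∧
      1 + x * ((t ^ (((n : ℝ) - 1) / (n : ℝ)) : ℝ) : ℂ) *
        (((1 - t) ^ ((1 : ℝ) / (n : ℝ)) : ℝ) : ℂ) *
        Complex.exp ((Real.pi : ℂ) * Complex.I / (n : ℂ)) ≠ 0}
    DifferentiableOn ℂ (fun x : ℂ =>
      1 + (1 / (4 * (Real.pi : ℂ) * Complex.I * (n : ℂ))) *
        ∫ t in (0:ℝ)..1,
          ((t ^ (1 / (2 * (n : ℝ)) - 1) : ℝ) : ℂ) *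
            (((1 - t) ^ (-(1 / (2 * (n : ℝ))) - 1) : ℝ) : ℂ) *
            (Complex.exp ((Real.pi : ℂ) * Complex.I / (2 * (n : ℂ))) *
                Complex.log (1 + x * ((t ^ (((n : ℝ) - 1) / (n : ℝ)) : ℝ) : ℂ) *
                  (((1 - t) ^ ((1 : ℝ) / (n : ℝ)) : ℝ) : ℂ) *
                  Complex.exp (-((Real.pi : ℂ) * Complex.I / (n : ℂ)))) -
              Complex.exp (-((Real.pi : ℂ) * Complex.I / (2 * (n : ℂ)))) *
                Complex.log (1 + x * ((t ^ (((n : ℝ) - 1) / (n : ℝ)) : ℝ) : ℂ) *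
                  (((1 - t) ^ ((1 : ℝ) / (n : ℝ)) : ℝ) : ℂ) *
                  Complex.exp ((Real.pi : ℂ) * Complex.I / (n : ℂ))))) U := by
  intro U
  have hN : (1:ℝ) < (n:ℝ) := by exact_mod_cast lt_of_lt_of_le one_lt_two hn
  have hN0 : (0:ℝ) < (n:ℝ) := by linarith
  have hnC : ((n:ℕ):ℂ) ≠ 0 := Nat.cast_ne_zero.mpr (by omega)
  -- norms of the exponential constants
  have habs1 : ‖(Complex.exp (-((Real.pi : ℂ) * Complex.I / (n : ℂ))))‖ = 1 := by
    rw [show (-((Real.pi : ℂ) * Complex.I / (n : ℂ)))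
        = ((-(Real.pi / (n:ℝ)) : ℝ) : ℂ) * Complex.I by push_cast; field_simp]
    exact Complex.norm_exp_ofReal_mul_I _
  have habs2 : ‖(Complex.exp ((Real.pi : ℂ) * Complex.I / (n : ℂ)))‖ = 1 := by
    rw [show ((Real.pi : ℂ) * Complex.I / (n : ℂ))
        = (((Real.pi / (n:ℝ)) : ℝ) : ℂ) * Complex.I by push_cast; field_simp]
    exact Complex.norm_exp_ofReal_mul_I _
  have habs3 : ‖Complex.exp ((Real.pi : ℂ) * Complex.I / (2 * (n : ℂ)))‖ = 1 := by
    rw [show ((Real.pi : ℂ) * Complex.I / (2 * (n : ℂ)))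
        = (((Real.pi / (2 * (n:ℝ))) : ℝ) : ℂ) * Complex.I by push_cast; field_simp]
    exact Complex.norm_exp_ofReal_mul_I _
  have habs4 : ‖Complex.exp (-((Real.pi : ℂ) * Complex.I / (2 * (n : ℂ))))‖ = 1 := by
    rw [show (-((Real.pi : ℂ) * Complex.I / (2 * (n : ℂ))))
        = ((-(Real.pi / (2 * (n:ℝ))) : ℝ) : ℂ) * Complex.I by push_cast; field_simp]
    exact Complex.norm_exp_ofReal_mul_I _
  -- the main differentiability statement, with the integral over `Ioo 0 1`
  have main : ∀ x₀ ∈ U, DifferentiableAt ℂ (fun x : ℂ =>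
      ∫ t in Ioo (0:ℝ) 1,
          ((t ^ (1 / (2 * (n : ℝ)) - 1) : ℝ) : ℂ) *
            (((1 - t) ^ (-(1 / (2 * (n : ℝ))) - 1) : ℝ) : ℂ) *
            (Complex.exp ((Real.pi : ℂ) * Complex.I / (2 * (n : ℂ))) *
                Complex.log (1 + x * ((t ^ (((n : ℝ) - 1) / (n : ℝ)) : ℝ) : ℂ) *
                  (((1 - t) ^ ((1 : ℝ) / (n : ℝ)) : ℝ) : ℂ) *
                  Complex.exp (-((Real.pi : ℂ) * Complex.I / (n : ℂ)))) -
              Complex.exp (-((Real.pi : ℂ) * Complex.I / (2 * (n : ℂ)))) *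
                Complex.log (1 + x * ((t ^ (((n : ℝ) - 1) / (n : ℝ)) : ℝ) : ℂ) *
                  (((1 - t) ^ ((1 : ℝ) / (n : ℝ)) : ℝ) : ℂ) *
                  Complex.exp ((Real.pi : ℂ) * Complex.I / (n : ℂ))))) x₀ := by
    intro x₀ hx₀
    obtain ⟨δm, hδm, Hm⟩ := key_aux hN x₀ _ habs1 (fun t ht => (hx₀ t ht).1)
    obtain ⟨δp, hδp, Hp⟩ := key_aux hN x₀ _ habs2 (fun t ht => (hx₀ t ht).2)
    set δ : ℝ := min δm δp with hδ_def
    have hδ : 0 < δ := lt_min hδm hδp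
    -- uniform facts on the ball of radius δ/2
    have Hm' : ∀ x ∈ Metric.ball x₀ (δ/2), ∀ t ∈ Icc (0:ℝ) 1,
        (1 + x * ((t ^ (((n:ℝ) - 1) / (n:ℝ)) : ℝ) : ℂ) * (((1 - t) ^ ((1:ℝ) / (n:ℝ)) : ℝ) : ℂ) *
          Complex.exp (-((Real.pi : ℂ) * Complex.I / (n : ℂ))) ∈ Complex.slitPlane) ∧
        δ/2 ≤ ‖1 + x * ((t ^ (((n:ℝ) - 1) / (n:ℝ)) : ℝ) : ℂ) * (((1 - t) ^ ((1:ℝ) / (n:ℝ)) : ℝ) : ℂ) *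
          Complex.exp (-((Real.pi : ℂ) * Complex.I / (n : ℂ)))‖ := by
      intro x hx t ht
      have hd : ‖x - x₀‖ < δm/2 := by
        have := Metric.mem_ball.mp hx
        rw [dist_eq_norm] at this
        have : ‖x - x₀‖ < δ/2 := this
        have h2 : δ ≤ δm := min_le_left _ _
        linarith
      obtain ⟨h1, h2⟩ := Hm x hd t ht
      exact ⟨h1, le_trans (by have := min_le_left δm δp; linarith) h2⟩
    have Hp' : ∀ x ∈ Metric.ball x₀ (δ/2), ∀ t ∈ Icc (0:ℝ) 1,
        (1 + x * ((t ^ (((n:ℝ) - 1) / (n:ℝ)) : ℝ) : ℂ) * (((1 - t) ^ ((1:ℝ) / (n:ℝ)) : ℝ) : ℂ) *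
          Complex.exp ((Real.pi : ℂ) * Complex.I / (n : ℂ)) ∈ Complex.slitPlane) ∧
        δ/2 ≤ ‖1 + x * ((t ^ (((n:ℝ) - 1) / (n:ℝ)) : ℝ) : ℂ) * (((1 - t) ^ ((1:ℝ) / (n:ℝ)) : ℝ) : ℂ) *
          Complex.exp ((Real.pi : ℂ) * Complex.I / (n : ℂ))‖ := by
      intro x hx t ht
      have hd : ‖x - x₀‖ < δp/2 := by
        have := Metric.mem_ball.mp hx
        rw [dist_eq_norm] at this
        have : ‖x - x₀‖ < δ/2 := this
        have h2 : δ ≤ δp := min_le_right _ _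
        linarith
      obtain ⟨h1, h2⟩ := Hp x hd t ht
      exact ⟨h1, le_trans (by have := min_le_right δm δp; linarith) h2⟩
    have hδ2 : (0:ℝ) < δ/2 := by positivity
    have hx₀ball : x₀ ∈ Metric.ball x₀ (δ/2) := Metric.mem_ball_self hδ2
    have hae : ∀ᵐ t ∂(volume.restrict (Ioo (0:ℝ) 1)), t ∈ Ioo (0:ℝ) 1 :=
      ae_restrict_mem measurableSet_Ioo
    have cont1 : ∀ e : ℝ, ContinuousOn (fun t : ℝ => t ^ e) (Ioo (0:ℝ) 1) := fun e t ht =>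
      (Real.continuousAt_rpow_const t e (Or.inl (ne_of_gt ht.1))).continuousWithinAt
    have cont2 : ∀ e : ℝ, ContinuousOn (fun t : ℝ => (1 - t) ^ e) (Ioo (0:ℝ) 1) := by
      intro e t ht
      have h1 : (1:ℝ) - t ≠ 0 := ne_of_gt (by linarith [ht.2])
      exact (ContinuousAt.comp (Real.continuousAt_rpow_const (1-t) e (Or.inl h1))
        ((continuous_const.sub continuous_id).continuousAt)).continuousWithinAt
    have contG : ContinuousOn (fun t : ℝ => ((t ^ (1 / (2 * (n : ℝ)) - 1) : ℝ) : ℂ) * (((1 - t) ^ (-(1 / (2 * (n : ℝ))) - 1) : ℝ) : ℂ)) (Ioo (0:ℝ) 1) :=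
      (Complex.continuous_ofReal.comp_continuousOn (cont1 _)).mul
        (Complex.continuous_ofReal.comp_continuousOn (cont2 _))
    have contInner : ∀ (x c : ℂ),
        ContinuousOn (fun t : ℝ => 1 + x * ((t ^ (((n : ℝ) - 1) / (n : ℝ)) : ℝ) : ℂ) * (((1 - t) ^ ((1 : ℝ) / (n : ℝ)) : ℝ) : ℂ) * c) (Ioo (0:ℝ) 1) := fun x c =>
      continuousOn_const.add
        (((continuousOn_const.mul (Complex.continuous_ofReal.comp_continuousOn (cont1 _))).mul
          (Complex.continuous_ofReal.comp_continuousOn (cont2 _))).mul continuousOn_const)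
    have contNum : ∀ c : ℂ, ContinuousOn (fun t : ℝ => ((t ^ (((n : ℝ) - 1) / (n : ℝ)) : ℝ) : ℂ) * (((1 - t) ^ ((1 : ℝ) / (n : ℝ)) : ℝ) : ℂ) * c) (Ioo (0:ℝ) 1) := fun c =>
      ((Complex.continuous_ofReal.comp_continuousOn (cont1 _)).mul
        (Complex.continuous_ofReal.comp_continuousOn (cont2 _))).mul continuousOn_const
    have hPQ : ∀ (x c : ℂ), ‖c‖ = 1 → ∀ t ∈ Ioo (0:ℝ) 1,
        ‖x * ((t ^ (((n : ℝ) - 1) / (n : ℝ)) : ℝ) : ℂ) * (((1 - t) ^ ((1 : ℝ) / (n : ℝ)) : ℝ) : ℂ) * c‖ = ‖x‖ * (t ^ (((n : ℝ) - 1) / (n : ℝ)) * (1 - t) ^ ((1 : ℝ) / (n : ℝ))) := by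
      intro x c hc t ht
      rw [norm_mul, norm_mul, norm_mul, Complex.norm_real, Complex.norm_real,
        hc, mul_one, Real.norm_eq_abs, Real.norm_eq_abs,
        abs_of_nonneg (Real.rpow_nonneg ht.1.le _),
        abs_of_nonneg (Real.rpow_nonneg (by linarith [ht.2] : (0:ℝ) ≤ 1 - t) _), mul_assoc]
    have hPQ1 : ∀ (c : ℂ), ‖c‖ = 1 → ∀ t ∈ Ioo (0:ℝ) 1,
        ‖((t ^ (((n : ℝ) - 1) / (n : ℝ)) : ℝ) : ℂ) * (((1 - t) ^ ((1 : ℝ) / (n : ℝ)) : ℝ) : ℂ) * c‖ = t ^ (((n : ℝ) - 1) / (n : ℝ)) * (1 - t) ^ ((1 : ℝ) / (n : ℝ)) := by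
      intro c hc t ht
      rw [norm_mul, norm_mul, Complex.norm_real, Complex.norm_real,
        hc, mul_one, Real.norm_eq_abs, Real.norm_eq_abs,
        abs_of_nonneg (Real.rpow_nonneg ht.1.le _),
        abs_of_nonneg (Real.rpow_nonneg (by linarith [ht.2] : (0:ℝ) ≤ 1 - t) _)]
    have hrle : ∀ t ∈ Icc (0:ℝ) 1, t ^ (((n : ℝ) - 1) / (n : ℝ)) * (1 - t) ^ ((1 : ℝ) / (n : ℝ)) ≤ 1 := by
      intro t ht
      exact mul_le_one₀ (Real.rpow_le_one ht.1 ht.2 (div_nonneg (by linarith) (by linarith)))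
        (Real.rpow_nonneg (by linarith [ht.2]) _)
        (Real.rpow_le_one (by linarith [ht.2]) (by linarith [ht.1]) (by positivity))
    have hcomb : ∀ t ∈ Ioo (0:ℝ) 1,
        t ^ (1 / (2 * (n : ℝ)) - 1) * (1 - t) ^ (-(1 / (2 * (n : ℝ))) - 1) * (t ^ (((n : ℝ) - 1) / (n : ℝ)) * (1 - t) ^ ((1 : ℝ) / (n : ℝ)))
          = t ^ (-(1 / (2 * (n : ℝ)))) * (1 - t) ^ (1 / (2 * (n : ℝ)) - 1) := by
      intro t ht
      have h1t : (0:ℝ) < 1 - t := by linarith [ht.2]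
      rw [show t ^ (1 / (2 * (n : ℝ)) - 1) * (1 - t) ^ (-(1 / (2 * (n : ℝ))) - 1) * (t ^ (((n : ℝ) - 1) / (n : ℝ)) * (1 - t) ^ ((1 : ℝ) / (n : ℝ)))
          = (t ^ (1 / (2 * (n : ℝ)) - 1) * t ^ (((n : ℝ) - 1) / (n : ℝ))) *
            ((1 - t) ^ (-(1 / (2 * (n : ℝ))) - 1) * (1 - t) ^ ((1 : ℝ) / (n : ℝ))) from by ring]
      rw [← Real.rpow_add ht.1, ← Real.rpow_add h1t]
      have e1 : 1 / (2 * (n : ℝ)) - 1 + ((n : ℝ) - 1) / (n : ℝ) = -(1 / (2 * (n : ℝ))) := by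
        field_simp; ring
      have e2 : -(1 / (2 * (n : ℝ))) - 1 + (1 : ℝ) / (n : ℝ) = 1 / (2 * (n : ℝ)) - 1 := by
        field_simp; ring
      rw [e1, e2]
    have hInt : IntegrableOn (fun t : ℝ => t ^ (-(1 / (2 * (n : ℝ)))) * (1 - t) ^ (1 / (2 * (n : ℝ)) - 1)) (Ioo 0 1) volume := by
      apply integrable_rpow_rpow
      · have h5 : 1 / (2 * (n : ℝ)) < 1 := by rw [div_lt_one (by linarith)]; linarith
        linarith
      · have h5 : (0:ℝ) < 1 / (2 * (n : ℝ)) := by positivity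
        linarith
    -- measurability on the ball
    have hmeasx : ∀ x ∈ Metric.ball x₀ (δ/2),
        AEStronglyMeasurable (fun t : ℝ => ((t ^ (1 / (2 * (n : ℝ)) - 1) : ℝ) : ℂ) * (((1 - t) ^ (-(1 / (2 * (n : ℝ))) - 1) : ℝ) : ℂ) * (Complex.exp ((Real.pi : ℂ) * Complex.I / (2 * (n : ℂ))) * Complex.log (1 + x * ((t ^ (((n : ℝ) - 1) / (n : ℝ)) : ℝ) : ℂ) * (((1 - t) ^ ((1 : ℝ) / (n : ℝ)) : ℝ) : ℂ) * Complex.exp (-((Real.pi : ℂ) * Complex.I / (n : ℂ)))) - Complex.exp (-((Real.pi : ℂ) * Complex.I / (2 * (n : ℂ)))) * Complex.log (1 + x * ((t ^ (((n : ℝ) - 1) / (n : ℝ)) : ℝ) : ℂ) * (((1 - t) ^ ((1 : ℝ) / (n : ℝ)) : ℝ) : ℂ) * Complex.exp ((Real.pi : ℂ) * Complex.I / (n : ℂ))))) (volume.restrict (Ioo (0:ℝ) 1)) := by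
      intro x hx
      refine ContinuousOn.aestronglyMeasurable ?_ measurableSet_Ioo
      refine ContinuousOn.mul contG (ContinuousOn.sub (continuousOn_const.mul ?_)
        (continuousOn_const.mul ?_))
      · exact (contInner x _).clog (fun t ht => (Hm' x hx t (Ioo_subset_Icc_self ht)).1)
      · exact (contInner x _).clog (fun t ht => (Hp' x hx t (Ioo_subset_Icc_self ht)).1)
    -- the constant for the logarithm bound
    set K : ℝ := 2 * (|Real.log (min (δ/2) 1)| + Real.log (1 + ‖x₀‖) + Real.pi) + 2 with hK_def
    have hK0 : 0 ≤ K := by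
      have h1 := Real.pi_pos
      have h2 : (0:ℝ) ≤ Real.log (1 + ‖x₀‖) := Real.log_nonneg (by linarith [norm_nonneg x₀])
      have h3 := abs_nonneg (Real.log (min (δ/2) 1))
      rw [hK_def]; linarith
    have hlog : ∀ (c : ℂ), ‖c‖ = 1 →
        (∀ t ∈ Icc (0:ℝ) 1, δ/2 ≤ ‖1 + x₀ * ((t ^ (((n : ℝ) - 1) / (n : ℝ)) : ℝ) : ℂ) * (((1 - t) ^ ((1 : ℝ) / (n : ℝ)) : ℝ) : ℂ) * c‖) →
        ∀ t ∈ Ioo (0:ℝ) 1,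
        ‖Complex.log (1 + x₀ * ((t ^ (((n : ℝ) - 1) / (n : ℝ)) : ℝ) : ℂ) * (((1 - t) ^ ((1 : ℝ) / (n : ℝ)) : ℝ) : ℂ) * c)‖ ≤ K * (‖x₀‖ * (t ^ (((n : ℝ) - 1) / (n : ℝ)) * (1 - t) ^ ((1 : ℝ) / (n : ℝ)))) := by
      intro c hc hlow t ht
      have hu := hPQ x₀ c hc t ht
      have h1 : min (δ/2) 1 ≤ ‖1 + x₀ * ((t ^ (((n : ℝ) - 1) / (n : ℝ)) : ℝ) : ℂ) * (((1 - t) ^ ((1 : ℝ) / (n : ℝ)) : ℝ) : ℂ) * c‖ :=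
        le_trans (min_le_left _ _) (hlow t (Ioo_subset_Icc_self ht))
      have h2 : ‖x₀ * ((t ^ (((n : ℝ) - 1) / (n : ℝ)) : ℝ) : ℂ) * (((1 - t) ^ ((1 : ℝ) / (n : ℝ)) : ℝ) : ℂ) * c‖ ≤ ‖x₀‖ := by
        rw [hu]
        calc ‖x₀‖ * (t ^ (((n : ℝ) - 1) / (n : ℝ)) * (1 - t) ^ ((1 : ℝ) / (n : ℝ))) ≤ ‖x₀‖ * 1 :=
              mul_le_mul_of_nonneg_left (hrle t (Ioo_subset_Icc_self ht)) (norm_nonneg _)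
          _ = ‖x₀‖ := mul_one _
      have h3 := norm_clog_le (lt_min hδ2 one_pos) (min_le_right _ _) _ h1 h2
      rw [hu] at h3
      exact h3
    -- integrability of the integrand at x₀
    have hint : Integrable (fun t : ℝ => ((t ^ (1 / (2 * (n : ℝ)) - 1) : ℝ) : ℂ) * (((1 - t) ^ (-(1 / (2 * (n : ℝ))) - 1) : ℝ) : ℂ) * (Complex.exp ((Real.pi : ℂ) * Complex.I / (2 * (n : ℂ))) * Complex.log (1 + x₀ * ((t ^ (((n : ℝ) - 1) / (n : ℝ)) : ℝ) : ℂ) * (((1 - t) ^ ((1 : ℝ) / (n : ℝ)) : ℝ) : ℂ) * Complex.exp (-((Real.pi : ℂ) * Complex.I / (n : ℂ)))) - Complex.exp (-((Real.pi : ℂ) * Complex.I / (2 * (n : ℂ)))) * Complex.log (1 + x₀ * ((t ^ (((n : ℝ) - 1) / (n : ℝ)) : ℝ) : ℂ) * (((1 - t) ^ ((1 : ℝ) / (n : ℝ)) : ℝ) : ℂ) * Complex.exp ((Real.pi : ℂ) * Complex.I / (n : ℂ))))) (volume.restrict (Ioo (0:ℝ) 1)) := by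
      refine Integrable.mono' (g := fun t : ℝ => 2 * K * ‖x₀‖ * (t ^ (-(1 / (2 * (n : ℝ)))) * (1 - t) ^ (1 / (2 * (n : ℝ)) - 1)))
        (hInt.const_mul _) (hmeasx x₀ hx₀ball) ?_
      filter_upwards [hae] with t ht
      have hg1 : (0:ℝ) ≤ t ^ (1 / (2 * (n : ℝ)) - 1) := Real.rpow_nonneg ht.1.le _
      have hg2 : (0:ℝ) ≤ (1 - t) ^ (-(1 / (2 * (n : ℝ))) - 1) :=
        Real.rpow_nonneg (by linarith [ht.2]) _
      have hLm := hlog _ habs1 (fun s hs => (Hm' x₀ hx₀ball s hs).2) t ht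
      have hLp := hlog _ habs2 (fun s hs => (Hp' x₀ hx₀ball s hs).2) t ht
      have hsub : ‖Complex.exp ((Real.pi : ℂ) * Complex.I / (2 * (n : ℂ))) * Complex.log (1 + x₀ * ((t ^ (((n : ℝ) - 1) / (n : ℝ)) : ℝ) : ℂ) * (((1 - t) ^ ((1 : ℝ) / (n : ℝ)) : ℝ) : ℂ) * Complex.exp (-((Real.pi : ℂ) * Complex.I / (n : ℂ)))) -
          Complex.exp (-((Real.pi : ℂ) * Complex.I / (2 * (n : ℂ)))) * Complex.log (1 + x₀ * ((t ^ (((n : ℝ) - 1) / (n : ℝ)) : ℝ) : ℂ) * (((1 - t) ^ ((1 : ℝ) / (n : ℝ)) : ℝ) : ℂ) * Complex.exp ((Real.pi : ℂ) * Complex.I / (n : ℂ)))‖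
          ≤ ‖Complex.log (1 + x₀ * ((t ^ (((n : ℝ) - 1) / (n : ℝ)) : ℝ) : ℂ) * (((1 - t) ^ ((1 : ℝ) / (n : ℝ)) : ℝ) : ℂ) * Complex.exp (-((Real.pi : ℂ) * Complex.I / (n : ℂ))))‖ +
            ‖Complex.log (1 + x₀ * ((t ^ (((n : ℝ) - 1) / (n : ℝ)) : ℝ) : ℂ) * (((1 - t) ^ ((1 : ℝ) / (n : ℝ)) : ℝ) : ℂ) * Complex.exp ((Real.pi : ℂ) * Complex.I / (n : ℂ)))‖ := by
        refine le_trans (norm_sub_le _ _) ?_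
        rw [norm_mul, norm_mul, habs3, habs4, one_mul, one_mul]
      calc ‖((t ^ (1 / (2 * (n : ℝ)) - 1) : ℝ) : ℂ) * (((1 - t) ^ (-(1 / (2 * (n : ℝ))) - 1) : ℝ) : ℂ) * (Complex.exp ((Real.pi : ℂ) * Complex.I / (2 * (n : ℂ))) * Complex.log (1 + x₀ * ((t ^ (((n : ℝ) - 1) / (n : ℝ)) : ℝ) : ℂ) * (((1 - t) ^ ((1 : ℝ) / (n : ℝ)) : ℝ) : ℂ) * Complex.exp (-((Real.pi : ℂ) * Complex.I / (n : ℂ)))) - Complex.exp (-((Real.pi : ℂ) * Complex.I / (2 * (n : ℂ)))) * Complex.log (1 + x₀ * ((t ^ (((n : ℝ) - 1) / (n : ℝ)) : ℝ) : ℂ) * (((1 - t) ^ ((1 : ℝ) / (n : ℝ)) : ℝ) : ℂ) * Complex.exp ((Real.pi : ℂ) * Complex.I / (n : ℂ))))‖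
          = t ^ (1 / (2 * (n : ℝ)) - 1) * (1 - t) ^ (-(1 / (2 * (n : ℝ))) - 1) *
            ‖Complex.exp ((Real.pi : ℂ) * Complex.I / (2 * (n : ℂ))) * Complex.log (1 + x₀ * ((t ^ (((n : ℝ) - 1) / (n : ℝ)) : ℝ) : ℂ) * (((1 - t) ^ ((1 : ℝ) / (n : ℝ)) : ℝ) : ℂ) * Complex.exp (-((Real.pi : ℂ) * Complex.I / (n : ℂ)))) -
             Complex.exp (-((Real.pi : ℂ) * Complex.I / (2 * (n : ℂ)))) * Complex.log (1 + x₀ * ((t ^ (((n : ℝ) - 1) / (n : ℝ)) : ℝ) : ℂ) * (((1 - t) ^ ((1 : ℝ) / (n : ℝ)) : ℝ) : ℂ) * Complex.exp ((Real.pi : ℂ) * Complex.I / (n : ℂ)))‖ := by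
            rw [norm_mul, norm_mul, Complex.norm_real, Complex.norm_real,
              Real.norm_eq_abs, Real.norm_eq_abs, abs_of_nonneg hg1, abs_of_nonneg hg2]
        _ ≤ t ^ (1 / (2 * (n : ℝ)) - 1) * (1 - t) ^ (-(1 / (2 * (n : ℝ))) - 1) *
            (K * (‖x₀‖ * (t ^ (((n : ℝ) - 1) / (n : ℝ)) * (1 - t) ^ ((1 : ℝ) / (n : ℝ)))) + K * (‖x₀‖ * (t ^ (((n : ℝ) - 1) / (n : ℝ)) * (1 - t) ^ ((1 : ℝ) / (n : ℝ))))) := by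
            refine mul_le_mul_of_nonneg_left (le_trans hsub (add_le_add hLm hLp))
              (mul_nonneg hg1 hg2)
        _ = 2 * K * ‖x₀‖ * (t ^ (1 / (2 * (n : ℝ)) - 1) * (1 - t) ^ (-(1 / (2 * (n : ℝ))) - 1) *
            (t ^ (((n : ℝ) - 1) / (n : ℝ)) * (1 - t) ^ ((1 : ℝ) / (n : ℝ)))) := by ring
        _ = 2 * K * ‖x₀‖ * (t ^ (-(1 / (2 * (n : ℝ)))) * (1 - t) ^ (1 / (2 * (n : ℝ)) - 1)) := by rw [hcomb t ht]
    -- measurability of the derivative at x₀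
    have hne : ∀ (c : ℂ), (∀ x ∈ Metric.ball x₀ (δ/2), ∀ t ∈ Icc (0:ℝ) 1,
          (1 + x * ((t ^ (((n : ℝ) - 1) / (n : ℝ)) : ℝ) : ℂ) * (((1 - t) ^ ((1 : ℝ) / (n : ℝ)) : ℝ) : ℂ) * c ∈ Complex.slitPlane) ∧
          δ/2 ≤ ‖1 + x * ((t ^ (((n : ℝ) - 1) / (n : ℝ)) : ℝ) : ℂ) * (((1 - t) ^ ((1 : ℝ) / (n : ℝ)) : ℝ) : ℂ) * c‖) →
        ∀ x ∈ Metric.ball x₀ (δ/2), ∀ t ∈ Ioo (0:ℝ) 1, 1 + x * ((t ^ (((n : ℝ) - 1) / (n : ℝ)) : ℝ) : ℂ) * (((1 - t) ^ ((1 : ℝ) / (n : ℝ)) : ℝ) : ℂ) * c ≠ 0 := by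
      intro c H x hx t ht
      have h2 := (H x hx t (Ioo_subset_Icc_self ht)).2
      exact norm_pos_iff.mp (lt_of_lt_of_le hδ2 h2)
    have hmeas' : AEStronglyMeasurable (fun t : ℝ => ((t ^ (1 / (2 * (n : ℝ)) - 1) : ℝ) : ℂ) * (((1 - t) ^ (-(1 / (2 * (n : ℝ))) - 1) : ℝ) : ℂ) * (Complex.exp ((Real.pi : ℂ) * Complex.I / (2 * (n : ℂ))) * (((t ^ (((n : ℝ) - 1) / (n : ℝ)) : ℝ) : ℂ) * (((1 - t) ^ ((1 : ℝ) / (n : ℝ)) : ℝ) : ℂ) * Complex.exp (-((Real.pi : ℂ) * Complex.I / (n : ℂ))) / (1 + x₀ * ((t ^ (((n : ℝ) - 1) / (n : ℝ)) : ℝ) : ℂ) * (((1 - t) ^ ((1 : ℝ) / (n : ℝ)) : ℝ) : ℂ) * Complex.exp (-((Real.pi : ℂ) * Complex.I / (n : ℂ))))) - Complex.exp (-((Real.pi : ℂ) * Complex.I / (2 * (n : ℂ)))) * (((t ^ (((n : ℝ) - 1) / (n : ℝ)) : ℝ) : ℂ) * (((1 - t) ^ ((1 : ℝ) / (n : ℝ))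 : ℝ) : ℂ) * Complex.exp ((Real.pi : ℂ) * Complex.I / (n : ℂ)) / (1 + x₀ * ((t ^ (((n : ℝ) - 1) / (n : ℝ)) : ℝ) : ℂ) * (((1 - t) ^ ((1 : ℝ) / (n : ℝ)) : ℝ) : ℂ) * Complex.exp ((Real.pi : ℂ) * Complex.I / (n : ℂ))))))
        (volume.restrict (Ioo (0:ℝ) 1)) := by
      refine ContinuousOn.aestronglyMeasurable ?_ measurableSet_Ioo
      refine ContinuousOn.mul contG (ContinuousOn.sub (continuousOn_const.mul ?_)
        (continuousOn_const.mul ?_))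
      · exact ContinuousOn.div (contNum _) (contInner x₀ _)
          (fun t ht => hne _ Hm' x₀ hx₀ball t ht)
      · exact ContinuousOn.div (contNum _) (contInner x₀ _)
          (fun t ht => hne _ Hp' x₀ hx₀ball t ht)
    -- the uniform bound for the derivative on the ball
    have hbound : ∀ᵐ t ∂(volume.restrict (Ioo (0:ℝ) 1)), ∀ x ∈ Metric.ball x₀ (δ/2),
        ‖((t ^ (1 / (2 * (n : ℝ)) - 1) : ℝ) : ℂ) * (((1 - t) ^ (-(1 / (2 * (n : ℝ))) - 1) : ℝ) : ℂ) * (Complex.exp ((Real.pi : ℂ) * Complex.I / (2 * (n : ℂ))) * (((t ^ (((n : ℝ) - 1) / (n : ℝ)) : ℝ) : ℂ) * (((1 - t) ^ ((1 : ℝ) / (n : ℝ)) : ℝ) : ℂ) * Complex.exp (-((Real.pi : ℂ) * Complex.I / (n : ℂ))) / (1 + x * ((t ^ (((n : ℝ) - 1) / (n : ℝ)) : ℝ) : ℂ) * (((1 - t) ^ ((1 : ℝ) / (n : ℝ)) : ℝ) : ℂ) * Complex.exp (-((Real.pi : ℂ) * Complex.I / (n : ℂ))))) - Complex.exp (-((Real.pi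 : ℂ) * Complex.I / (2 * (n : ℂ)))) * (((t ^ (((n : ℝ) - 1) / (n : ℝ)) : ℝ) : ℂ) * (((1 - t) ^ ((1 : ℝ) / (n : ℝ)) : ℝ) : ℂ) * Complex.exp ((Real.pi : ℂ) * Complex.I / (n : ℂ)) / (1 + x * ((t ^ (((n : ℝ) - 1) / (n : ℝ)) : ℝ) : ℂ) * (((1 - t) ^ ((1 : ℝ) / (n : ℝ)) : ℝ) : ℂ) * Complex.exp ((Real.pi : ℂ) * Complex.I / (n : ℂ)))))‖ ≤ (4/δ) * (t ^ (-(1 / (2 * (n : ℝ)))) * (1 - t) ^ (1 / (2 * (n : ℝ)) - 1)) := by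
      filter_upwards [hae] with t ht
      intro x hx
      have hg1 : (0:ℝ) ≤ t ^ (1 / (2 * (n : ℝ)) - 1) := Real.rpow_nonneg ht.1.le _
      have hg2 : (0:ℝ) ≤ (1 - t) ^ (-(1 / (2 * (n : ℝ))) - 1) :=
        Real.rpow_nonneg (by linarith [ht.2]) _
      have hrt0 : (0:ℝ) ≤ t ^ (((n : ℝ) - 1) / (n : ℝ)) * (1 - t) ^ ((1 : ℝ) / (n : ℝ)) :=
        mul_nonneg (Real.rpow_nonneg ht.1.le _) (Real.rpow_nonneg (by linarith [ht.2]) _)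
      have hzm := (Hm' x hx t (Ioo_subset_Icc_self ht)).2
      have hzp := (Hp' x hx t (Ioo_subset_Icc_self ht)).2
      have hDsub : ‖Complex.exp ((Real.pi : ℂ) * Complex.I / (2 * (n : ℂ))) * (((t ^ (((n : ℝ) - 1) / (n : ℝ)) : ℝ) : ℂ) * (((1 - t) ^ ((1 : ℝ) / (n : ℝ)) : ℝ) : ℂ) * Complex.exp (-((Real.pi : ℂ) * Complex.I / (n : ℂ))) / (1 + x * ((t ^ (((n : ℝ) - 1) / (n : ℝ)) : ℝ) : ℂ) * (((1 - t) ^ ((1 : ℝ) / (n : ℝ)) : ℝ) : ℂ) * Complex.exp (-((Real.pi : ℂ) * Complex.I / (n : ℂ))))) -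
          Complex.exp (-((Real.pi : ℂ) * Complex.I / (2 * (n : ℂ)))) * (((t ^ (((n : ℝ) - 1) / (n : ℝ)) : ℝ) : ℂ) * (((1 - t) ^ ((1 : ℝ) / (n : ℝ)) : ℝ) : ℂ) * Complex.exp ((Real.pi : ℂ) * Complex.I / (n : ℂ)) / (1 + x * ((t ^ (((n : ℝ) - 1) / (n : ℝ)) : ℝ) : ℂ) * (((1 - t) ^ ((1 : ℝ) / (n : ℝ)) : ℝ) : ℂ) * Complex.exp ((Real.pi : ℂ) * Complex.I / (n : ℂ))))‖
          ≤ (t ^ (((n : ℝ) - 1) / (n : ℝ)) * (1 - t) ^ ((1 : ℝ) / (n : ℝ))) / (δ/2) + (t ^ (((n : ℝ) - 1) / (n : ℝ)) * (1 - t) ^ ((1 : ℝ) / (n : ℝ))) / (δ/2) := by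
        refine le_trans (norm_sub_le _ _) ?_
        rw [norm_mul, norm_mul, habs3, habs4, one_mul, one_mul, norm_div, norm_div,
          hPQ1 _ habs1 t ht, hPQ1 _ habs2 t ht]
        gcongr
      calc ‖((t ^ (1 / (2 * (n : ℝ)) - 1) : ℝ) : ℂ) * (((1 - t) ^ (-(1 / (2 * (n : ℝ))) - 1) : ℝ) : ℂ) * (Complex.exp ((Real.pi : ℂ) * Complex.I / (2 * (n : ℂ))) * (((t ^ (((n : ℝ) - 1) / (n : ℝ)) : ℝ) : ℂ) * (((1 - t) ^ ((1 : ℝ) / (n : ℝ)) : ℝ) : ℂ) * Complex.exp (-((Real.pi : ℂ) * Complex.I / (n : ℂ))) / (1 + x * ((t ^ (((n : ℝ) - 1) / (n : ℝ)) : ℝ) : ℂ) * (((1 - t) ^ ((1 : ℝ) / (n : ℝ)) : ℝ) : ℂ) * Complex.exp (-((Real.pi : ℂ) * Complex.I / (n : ℂ))))) - Complex.exp (-((Real.pi : ℂ) * Complex.I / (2 * (n : ℂ)))) * (((t ^ (((n : ℝ) - 1) / (n : ℝ)) : ℝ) : ℂ) * (((1 - t) ^ ((1 : ℝ) / (n :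 ℝ)) : ℝ) : ℂ) * Complex.exp ((Real.pi : ℂ) * Complex.I / (n : ℂ)) / (1 + x * ((t ^ (((n : ℝ) - 1) / (n : ℝ)) : ℝ) : ℂ) * (((1 - t) ^ ((1 : ℝ) / (n : ℝ)) : ℝ) : ℂ) * Complex.exp ((Real.pi : ℂ) * Complex.I / (n : ℂ)))))‖
          = t ^ (1 / (2 * (n : ℝ)) - 1) * (1 - t) ^ (-(1 / (2 * (n : ℝ))) - 1) *
            ‖Complex.exp ((Real.pi : ℂ) * Complex.I / (2 * (n : ℂ))) * (((t ^ (((n : ℝ) - 1) / (n : ℝ)) : ℝ) : ℂ) * (((1 - t) ^ ((1 : ℝ) / (n : ℝ)) : ℝ) : ℂ) * Complex.exp (-((Real.pi : ℂ) * Complex.I / (n : ℂ))) / (1 + x * ((t ^ (((n : ℝ) - 1) / (n : ℝ)) : ℝ) : ℂ) * (((1 - t) ^ ((1 : ℝ) / (n : ℝ)) : ℝ) : ℂ) * Complex.exp (-((Real.pi : ℂ) * Complex.I / (n : ℂ))))) -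
             Complex.exp (-((Real.pi : ℂ) * Complex.I / (2 * (n : ℂ)))) * (((t ^ (((n : ℝ) - 1) / (n : ℝ)) : ℝ) : ℂ) * (((1 - t) ^ ((1 : ℝ) / (n : ℝ)) : ℝ) : ℂ) * Complex.exp ((Real.pi : ℂ) * Complex.I / (n : ℂ)) / (1 + x * ((t ^ (((n : ℝ) - 1) / (n : ℝ)) : ℝ) : ℂ) * (((1 - t) ^ ((1 : ℝ) / (n : ℝ)) : ℝ) : ℂ) * Complex.exp ((Real.pi : ℂ) * Complex.I / (n : ℂ))))‖ := by
            rw [norm_mul, norm_mul, Complex.norm_real, Complex.norm_real,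
              Real.norm_eq_abs, Real.norm_eq_abs, abs_of_nonneg hg1, abs_of_nonneg hg2]
        _ ≤ t ^ (1 / (2 * (n : ℝ)) - 1) * (1 - t) ^ (-(1 / (2 * (n : ℝ))) - 1) *
            ((t ^ (((n : ℝ) - 1) / (n : ℝ)) * (1 - t) ^ ((1 : ℝ) / (n : ℝ))) / (δ/2) + (t ^ (((n : ℝ) - 1) / (n : ℝ)) * (1 - t) ^ ((1 : ℝ) / (n : ℝ))) / (δ/2)) :=
            mul_le_mul_of_nonneg_left hDsub (mul_nonneg hg1 hg2)
        _ = (4/δ) * (t ^ (1 / (2 * (n : ℝ)) - 1) * (1 - t) ^ (-(1 / (2 * (n : ℝ))) - 1) *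
            (t ^ (((n : ℝ) - 1) / (n : ℝ)) * (1 - t) ^ ((1 : ℝ) / (n : ℝ)))) := by field_simp; ring
        _ = (4/δ) * (t ^ (-(1 / (2 * (n : ℝ)))) * (1 - t) ^ (1 / (2 * (n : ℝ)) - 1)) := by rw [hcomb t ht]
    -- differentiability in x for a.e. t
    have hderiv : ∀ᵐ t ∂(volume.restrict (Ioo (0:ℝ) 1)), ∀ x ∈ Metric.ball x₀ (δ/2),
        HasDerivAt (fun x : ℂ => ((t ^ (1 / (2 * (n : ℝ)) - 1) : ℝ) : ℂ) * (((1 - t) ^ (-(1 / (2 * (n : ℝ))) - 1) : ℝ) : ℂ) * (Complex.exp ((Real.pi : ℂ) * Complex.I / (2 * (n : ℂ))) * Complex.log (1 + x * ((t ^ (((n : ℝ) - 1) / (n : ℝ)) : ℝ) : ℂ) * (((1 - t) ^ ((1 : ℝ) / (n : ℝ)) : ℝ) : ℂ) * Complex.exp (-((Real.pi : ℂ) * Complex.I / (n : ℂ)))) - Complex.exp (-((Real.pi : ℂ) * Complex.I / (2 * (n : ℂ)))) * Complex.log (1 + x * ((t ^ (((n : ℝ) - 1) / (n : ℝ)) :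 ℝ) : ℂ) * (((1 - t) ^ ((1 : ℝ) / (n : ℝ)) : ℝ) : ℂ) * Complex.exp ((Real.pi : ℂ) * Complex.I / (n : ℂ))))) (((t ^ (1 / (2 * (n : ℝ)) - 1) : ℝ) : ℂ) * (((1 - t) ^ (-(1 / (2 * (n : ℝ))) - 1) : ℝ) : ℂ) * (Complex.exp ((Real.pi : ℂ) * Complex.I / (2 * (n : ℂ))) * (((t ^ (((n : ℝ) - 1) / (n : ℝ)) : ℝ) : ℂ) * (((1 - t) ^ ((1 : ℝ) / (n : ℝ)) : ℝ) : ℂ) * Complex.exp (-((Real.pi : ℂ) * Complex.I / (n : ℂ))) / (1 + x * ((t ^ (((n : ℝ) - 1) / (n : ℝ)) : ℝ) : ℂ) * (((1 - t) ^ ((1 : ℝ) / (n : ℝ)) : ℝ) : ℂ) * Complex.exp (-((Real.pi : ℂ) * Complex.I / (n : ℂ))))) - Complex.exp (-((Real.pi : ℂ) * Complex.I / (2 * (n : ℂ)))) * (((t ^ (((n : ℝ) - 1) / (n : ℝ)) : ℝ) : ℂ) * (((1 - t) ^ ((1 : ℝ) / (n : ℝ)) : ℝ) : ℂ) * Complex.exp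 ((Real.pi : ℂ) * Complex.I / (n : ℂ)) / (1 + x * ((t ^ (((n : ℝ) - 1) / (n : ℝ)) : ℝ) : ℂ) * (((1 - t) ^ ((1 : ℝ) / (n : ℝ)) : ℝ) : ℂ) * Complex.exp ((Real.pi : ℂ) * Complex.I / (n : ℂ)))))) x := by
      filter_upwards [hae] with t ht
      intro x hx
      have hslitm := (Hm' x hx t (Ioo_subset_Icc_self ht)).1
      have hslitp := (Hp' x hx t (Ioo_subset_Icc_self ht)).1
      have dm : HasDerivAt (fun y : ℂ => 1 + y * ((t ^ (((n : ℝ) - 1) / (n : ℝ)) : ℝ) : ℂ) * (((1 - t) ^ ((1 : ℝ) / (n : ℝ)) : ℝ) : ℂ) * Complex.exp (-((Real.pi : ℂ) * Complex.I / (n : ℂ)))) (((t ^ (((n : ℝ) - 1) / (n : ℝ)) : ℝ) : ℂ) * (((1 - t) ^ ((1 : ℝ) / (n : ℝ)) : ℝ) : ℂ) * Complex.exp (-((Real.pi : ℂ) * Complex.I / (n : ℂ)))) x := by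
        simpa only [one_mul] using
          ((((hasDerivAt_id' x).mul_const ((t ^ (((n : ℝ) - 1) / (n : ℝ)) : ℝ) : ℂ)).mul_const (((1 - t) ^ ((1 : ℝ) / (n : ℝ)) : ℝ) : ℂ)).mul_const (Complex.exp (-((Real.pi : ℂ) * Complex.I / (n : ℂ))))).const_add 1
      have dp : HasDerivAt (fun y : ℂ => 1 + y * ((t ^ (((n : ℝ) - 1) / (n : ℝ)) : ℝ) : ℂ) * (((1 - t) ^ ((1 : ℝ) / (n : ℝ)) : ℝ) : ℂ) * Complex.exp ((Real.pi : ℂ) * Complex.I / (n : ℂ))) (((t ^ (((n : ℝ) - 1) / (n : ℝ)) : ℝ) : ℂ) * (((1 - t) ^ ((1 : ℝ) / (n : ℝ)) : ℝ) : ℂ) * Complex.exp ((Real.pi : ℂ) * Complex.I / (n : ℂ))) x := by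
        simpa only [one_mul] using
          ((((hasDerivAt_id' x).mul_const ((t ^ (((n : ℝ) - 1) / (n : ℝ)) : ℝ) : ℂ)).mul_const (((1 - t) ^ ((1 : ℝ) / (n : ℝ)) : ℝ) : ℂ)).mul_const (Complex.exp ((Real.pi : ℂ) * Complex.I / (n : ℂ)))).const_add 1
      exact (((dm.clog hslitm).const_mul (Complex.exp ((Real.pi : ℂ) * Complex.I / (2 * (n : ℂ))))).sub
        ((dp.clog hslitp).const_mul (Complex.exp (-((Real.pi : ℂ) * Complex.I / (2 * (n : ℂ))))))).const_mul (((t ^ (1 / (2 * (n : ℝ)) - 1) : ℝ) : ℂ) * (((1 - t) ^ (-(1 / (2 * (n : ℝ))) - 1) : ℝ) : ℂ))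
    -- apply the dominated-derivative theorem
    obtain ⟨-, hHD⟩ := hasDerivAt_integral_of_dominated_loc_of_deriv_le
      (μ := volume.restrict (Ioo (0:ℝ) 1))
      (F := fun (x : ℂ) (t : ℝ) => ((t ^ (1 / (2 * (n : ℝ)) - 1) : ℝ) : ℂ) * (((1 - t) ^ (-(1 / (2 * (n : ℝ))) - 1) : ℝ) : ℂ) * (Complex.exp ((Real.pi : ℂ) * Complex.I / (2 * (n : ℂ))) * Complex.log (1 + x * ((t ^ (((n : ℝ) - 1) / (n : ℝ)) : ℝ) : ℂ) * (((1 - t) ^ ((1 : ℝ) / (n : ℝ)) : ℝ) : ℂ) * Complex.exp (-((Real.pi : ℂ) * Complex.I / (n : ℂ)))) - Complex.exp (-((Real.pi : ℂ) * Complex.I / (2 * (n : ℂ)))) * Complex.log (1 + x * ((t ^ (((n : ℝ) - 1) / (n : ℝ)) : ℝ) : ℂ) * (((1 - t) ^ ((1 : ℝ) / (n : ℝ)) : ℝ) : ℂ) * Complex.exp ((Real.pi : ℂ) * Complex.I / (n : ℂ)))))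
      (F' := fun (x : ℂ) (t : ℝ) => ((t ^ (1 / (2 * (n : ℝ)) - 1) : ℝ) : ℂ) * (((1 - t) ^ (-(1 / (2 * (n : ℝ))) - 1) : ℝ) : ℂ) * (Complex.exp ((Real.pi : ℂ) * Complex.I / (2 * (n : ℂ))) * (((t ^ (((n : ℝ) - 1) / (n : ℝ)) : ℝ) : ℂ) * (((1 - t) ^ ((1 : ℝ) / (n : ℝ)) : ℝ) : ℂ) * Complex.exp (-((Real.pi : ℂ) * Complex.I / (n : ℂ))) / (1 + x * ((t ^ (((n : ℝ) - 1) / (n : ℝ)) : ℝ) : ℂ) * (((1 - t) ^ ((1 : ℝ) / (n : ℝ)) : ℝ) : ℂ) * Complex.exp (-((Real.pi : ℂ) * Complex.I / (n : ℂ))))) - Complex.exp (-((Real.pi : ℂ) * Complex.I / (2 * (n : ℂ)))) * (((t ^ (((n : ℝ) - 1) / (n : ℝ)) : ℝ) : ℂ) * (((1 - t) ^ ((1 : ℝ) / (n : ℝ)) : ℝ) : ℂ) * Complex.exp ((Real.pi : ℂ) * Complex.I / (n : ℂ)) / (1 + x * ((t ^ (((n : ℝ) - 1) / (n : ℝ))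 : ℝ) : ℂ) * (((1 - t) ^ ((1 : ℝ) / (n : ℝ)) : ℝ) : ℂ) * Complex.exp ((Real.pi : ℂ) * Complex.I / (n : ℂ))))))
      (x₀ := x₀) (bound := fun t : ℝ => (4/δ) * (t ^ (-(1 / (2 * (n : ℝ)))) * (1 - t) ^ (1 / (2 * (n : ℝ)) - 1)))
      (Metric.ball_mem_nhds x₀ hδ2) (Filter.eventually_of_mem (Metric.ball_mem_nhds x₀ hδ2) hmeasx)
      hint hmeas' hbound (hInt.const_mul _) hderiv
    exact hHD.differentiableAt

  -- reduce the statement to `main`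
  have hdiff : DifferentiableOn ℂ (fun x : ℂ =>
      1 + (1 / (4 * (Real.pi : ℂ) * Complex.I * (n : ℂ))) *
        ∫ t in Ioo (0:ℝ) 1,
          ((t ^ (1 / (2 * (n : ℝ)) - 1) : ℝ) : ℂ) *
            (((1 - t) ^ (-(1 / (2 * (n : ℝ))) - 1) : ℝ) : ℂ) *
            (Complex.exp ((Real.pi : ℂ) * Complex.I / (2 * (n : ℂ))) *
                Complex.log (1 + x * ((t ^ (((n : ℝ) - 1) / (n : ℝ)) : ℝ) : ℂ) *
                  (((1 - t) ^ ((1 : ℝ) / (n : ℝ)) : ℝ) : ℂ) *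
                  Complex.exp (-((Real.pi : ℂ) * Complex.I / (n : ℂ)))) -
              Complex.exp (-((Real.pi : ℂ) * Complex.I / (2 * (n : ℂ)))) *
                Complex.log (1 + x * ((t ^ (((n : ℝ) - 1) / (n : ℝ)) : ℝ) : ℂ) *
                  (((1 - t) ^ ((1 : ℝ) / (n : ℝ)) : ℝ) : ℂ) *
                  Complex.exp ((Real.pi : ℂ) * Complex.I / (n : ℂ))))) U := by
    intro x₀ hx₀
    exact (((main x₀ hx₀).const_mul _).const_add 1).differentiableWithinAt
  refine DifferentiableOn.congr hdiff ?_
  intro x hx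
  rw [intervalIntegral.integral_of_le zero_le_one, integral_Ioc_eq_integral_Ioo]
end
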